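/- arXiv:2004.11515 — 4 statements merged into one kernel-verified Lean document; each statement's English description precedes it below -/
import Mathlib

section
/- Let φ satisfy (A1). Then Φ is sequentially weak-* lower semicontinuous on M(Ω): if a sequence μ^(k) ∈ M(Ω) converges weak-* to μ ∈ M(Ω) (i.e. ∫ g dμ^(k) → ∫ g dμ for every g ∈ C(Ω)), then liminf_{k→∞} Φ(μ^(k)) ≥ Φ(μ). -/
/-- Assumption (A1) from the paper for a penalty `φ : [0,∞) → [0,∞)` with derivative `φD`
and `γ`-convexity constant `γ ≥ 0`: `φ` is concave, nondecreasing, `φ 0 = 0`, has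
(one-sided) derivative `φD z` at every `z ≥ 0` with `φD 0 = 1`, `φ z → ∞` as `z → ∞`, and
`0 ≤ φD z₁ - φD z₂ ≤ γ (z₂ - z₁)` for all `0 ≤ z₁ ≤ z₂`. -/
structure A1 (φ φD : ℝ → ℝ) (γ : ℝ) : Prop where
  nonneg : ∀ z, 0 ≤ z → 0 ≤ φ z
  concave : ConcaveOn ℝ (Set.Ici (0 : ℝ)) φ
  mono : MonotoneOn φ (Set.Ici (0 : ℝ))
  map_zero : φ 0 = 0
  hasDeriv : ∀ z, 0 ≤ z → HasDerivWithinAt φ (φD z) (Set.Ici (0 : ℝ)) z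
  deriv_zero : φD 0 = 1
  tendsto_top : Filter.Tendsto φ Filter.atTop Filter.atTop
  gamma_nonneg : 0 ≤ γ
  semiconvex : ∀ z₁ z₂, 0 ≤ z₁ → z₁ ≤ z₂ →
    0 ≤ φD z₁ - φD z₂ ∧ φD z₁ - φD z₂ ≤ γ * (z₂ - z₁)

/-- Assumption (A2) from the paper: there are `γ̂ > 0` and `ẑ > 0` such that
`γ̂ (z₂ - z₁) ≤ φD z₁ - φD z₂` for all `0 ≤ z₁ ≤ z₂ ≤ ẑ`. -/
def A2 (φD : ℝ → ℝ) (γh zh : ℝ) : Prop :=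
  0 < γh ∧ 0 < zh ∧
    ∀ z₁ z₂, 0 ≤ z₁ → z₁ ≤ z₂ → z₂ ≤ zh → γh * (z₂ - z₁) ≤ φD z₁ - φD z₂

open MeasureTheory

/-- Integral of a real function against a finite signed measure, via the Jordan
decomposition. -/
noncomputable def sInt {α : Type*} [MeasurableSpace α]
    (μ : SignedMeasure α) (g : α → ℝ) : ℝ :=
  (∫ x, g x ∂μ.toJordanDecomposition.posPart) -
    ∫ x, g x ∂μ.toJordanDecomposition.negPart

/-- The total variation norm `‖μ‖_{M(Ω)} = |μ|(Ω)` of a finite signed measure. -/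
noncomputable def tvNorm {α : Type*} [MeasurableSpace α] (μ : SignedMeasure α) : ℝ :=
  (μ.totalVariation Set.univ).toReal

/-- The set of atoms of (the total variation of) a signed measure. -/
def atomsOf {α : Type*} [MeasurableSpace α] (μ : SignedMeasure α) : Set α :=
  {ω | μ.totalVariation {ω} ≠ 0}

/-- The nonconvex penalty functional
`Φ(μ) = |μ|(Ω \ atom(μ)) + Σ_{ω ∈ atom(μ)} φ(|μ|({ω}))`. -/
noncomputable def PhiPen {α : Type*} [MeasurableSpace α]
    (φ : ℝ → ℝ) (μ : SignedMeasure α) : ℝ :=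
  (μ.totalVariation (atomsOf μ)ᶜ).toReal +
    ∑' ω : atomsOf μ, φ (μ.totalVariation {(ω : α)}).toReal


section Aux
set_option linter.unusedSectionVars false

namespace PhiLSC

section Phi
variable {φ φD : ℝ → ℝ} {γ : ℝ}

variable {φ φD : ℝ → ℝ} {γ : ℝ}

lemma phi_frac (hA1 : A1 φ φD γ) {z y : ℝ} (hz : 0 ≤ z) (hzy : z ≤ y) :
    z / y * φ y ≤ φ z := by
  rcases eq_or_lt_of_le (hz.trans hzy) with hy | hy0
  · have hz0 : z = 0 := le_antisymm (hy ▸ hzy) hz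
    simp [hz0, hA1.map_zero]
  have h : (1 - z/y) • φ 0 + (z/y) • φ y ≤ φ ((1 - z/y) • (0:ℝ) + (z/y) • y) :=
    hA1.concave.2 (Set.mem_Ici.2 (le_refl (0:ℝ))) (Set.mem_Ici.2 hy0.le)
      (by
        have : z / y ≤ 1 := (div_le_one hy0).2 hzy
        linarith)
      (by positivity) (by ring)
  have hzy' : (1 - z / y) • (0:ℝ) + (z / y) • y = z := by
    rw [smul_zero, zero_add, smul_eq_mul, div_mul_cancel₀ z hy0.ne']
  rw [hzy', hA1.map_zero] at h
  simpa using h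

lemma slope_tendsto (hA1 : A1 φ φD γ) :
    Filter.Tendsto (fun z => φ z / z) (nhdsWithin 0 (Set.Ioi 0)) (nhds 1) := by
  have h := (hasDerivWithinAt_iff_tendsto_slope).1 (hA1.hasDeriv 0 le_rfl)
  rw [hA1.deriv_zero] at h
  have hset : Set.Ici (0:ℝ) \ {0} = Set.Ioi 0 := by
    ext x; simp [Set.mem_diff, lt_iff_le_and_ne, eq_comm]
  rw [hset] at h
  refine h.congr fun z => ?_
  simp [slope, hA1.map_zero, div_eq_inv_mul]

lemma phi_le_id (hA1 : A1 φ φD γ) {y : ℝ} (hy : 0 ≤ y) : φ y ≤ y := by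
  rcases eq_or_lt_of_le hy with h | hy0
  · simp [← h, hA1.map_zero]
  have hev : ∀ᶠ z in nhdsWithin 0 (Set.Ioi 0), φ y / y ≤ φ z / z := by
    filter_upwards [self_mem_nhdsWithin,
      eventually_nhdsWithin_of_eventually_nhds (eventually_lt_nhds hy0)] with z hz hzy
    have hz0 : (0:ℝ) < z := hz
    rw [div_le_div_iff₀ hy0 hz0]
    have := phi_frac hA1 hz0.le hzy.le
    rw [div_mul_eq_mul_div, div_le_iff₀ hy0] at this
    nlinarith
  have := ge_of_tendsto (slope_tendsto hA1) hev
  rw [div_le_one hy0] at this; exact this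

lemma phi_subadd (hA1 : A1 φ φD γ) {a b : ℝ} (ha : 0 ≤ a) (hb : 0 ≤ b) :
    φ (a + b) ≤ φ a + φ b := by
  rcases eq_or_lt_of_le (by linarith : (0:ℝ) ≤ a + b) with h | hab
  · have ha0 : a = 0 := by linarith
    have hb0 : b = 0 := by linarith
    simp [ha0, hb0, hA1.map_zero]
  have h1 := phi_frac hA1 ha (by linarith : a ≤ a + b)
  have h2 := phi_frac hA1 hb (by linarith : b ≤ a + b)
  have hφ : 0 ≤ φ (a+b) := hA1.nonneg _ (by linarith)
  have : (a / (a+b) + b / (a+b)) * φ (a+b) ≤ φ a + φ b := by linarith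
  rw [← add_div, div_self (ne_of_gt hab), one_mul] at this
  exact this

lemma phi_add_le (hA1 : A1 φ φD γ) {a b : ℝ} (ha : 0 ≤ a) (hb : 0 ≤ b) :
    φ (a + b) ≤ a + φ b :=
  le_trans (phi_subadd hA1 ha hb) (by linarith [phi_le_id hA1 ha])

lemma phi_lip (hA1 : A1 φ φD γ) {a b : ℝ} (ha : 0 ≤ a) (hab : a ≤ b) :
    φ b ≤ φ a + (b - a) := by
  have := phi_add_le hA1 (by linarith : (0:ℝ) ≤ b - a) ha
  rw [sub_add_cancel] at this
  linarith

/-- key approximation lemma: if `x' ≥ x - η` then `φ x' ≥ φ x - η`. -/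
lemma phi_lb (hA1 : A1 φ φD γ) {x x' η : ℝ} (hx : 0 ≤ x) (hx' : 0 ≤ x')
    (hη : 0 ≤ η) (h : x - η ≤ x') : φ x - η ≤ φ x' := by
  rcases le_or_gt x x' with h1 | h1
  · have := hA1.mono (Set.mem_Ici.2 hx) (Set.mem_Ici.2 hx') h1; linarith
  · have := phi_lip hA1 hx' h1.le; linarith

lemma phi_small (hA1 : A1 φ φD γ) {ε : ℝ} (hε : 0 < ε) :
    ∃ δ > 0, ∀ z, 0 ≤ z → z ≤ δ → (1 - ε) * z ≤ φ z := by
  have hev : ∀ᶠ z in nhdsWithin 0 (Set.Ioi 0), 1 - ε < φ z / z :=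
    (slope_tendsto hA1).eventually (eventually_gt_nhds (by linarith))
  obtain ⟨δ, hδmem, hδ⟩ := (hev.and self_mem_nhdsWithin).exists
  refine ⟨δ, hδ, fun z hz hzδ => ?_⟩
  have hδ0 : (0:ℝ) < δ := hδ
  have := phi_frac hA1 hz hzδ
  have h2 : (1 - ε) * z ≤ z / δ * φ δ := by
    rw [div_mul_eq_mul_div, mul_comm z (φ δ), ← div_mul_eq_mul_div]
    have := hδmem.le
    nlinarith [mul_le_mul_of_nonneg_right this hz]
  linarith

lemma phi_sum_le (hA1 : A1 φ φD γ) {ι : Type*} (s : Finset ι) (z : ι → ℝ)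
    (hz : ∀ i, 0 ≤ z i) : φ (∑ i ∈ s, z i) ≤ ∑ i ∈ s, φ (z i) := by
  classical
  induction s using Finset.cons_induction with
  | empty => simp [hA1.map_zero]
  | cons a s hnot ih =>
    rw [Finset.sum_cons, Finset.sum_cons]
    calc φ (z a + ∑ i ∈ s, z i) ≤ φ (z a) + φ (∑ i ∈ s, z i) :=
          phi_subadd hA1 (hz a) (Finset.sum_nonneg fun i _ => hz i)
      _ ≤ _ := by linarith

lemma phi_tsum_le (hA1 : A1 φ φD γ) {ι : Type*} (z : ι → ℝ)
    (hz : ∀ i, 0 ≤ z i) (hsum : Summable z) :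
    φ (∑' i, z i) ≤ ∑' i, φ (z i) := by
  have hsumφ : Summable (fun i => φ (z i)) :=
    Summable.of_nonneg_of_le (fun i => hA1.nonneg _ (hz i))
      (fun i => phi_le_id hA1 (hz i)) hsum
  refine le_of_forall_pos_le_add fun ε hε => ?_
  have hev : ∀ᶠ t : Finset ι in Filter.atTop,
      dist (∑ i ∈ t, z i) (∑' i, z i) < ε :=
    hsum.hasSum.eventually (Metric.ball_mem_nhds _ hε)
  obtain ⟨t, ht'⟩ := hev.exists
  rw [Real.dist_eq, abs_lt] at ht'
  have h1 : ∑' i, z i - ε ≤ ∑ i ∈ t, z i := by linarith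
  have h2 : ∑ i ∈ t, z i ≤ ∑' i, z i := Summable.sum_le_tsum t (fun i _ => hz i) hsum
  calc φ (∑' i, z i) ≤ φ (∑ i ∈ t, z i) + (∑' i, z i - ∑ i ∈ t, z i) := by
        have := phi_lip hA1 (Finset.sum_nonneg fun i _ => hz i) h2; linarith
    _ ≤ ∑ i ∈ t, φ (z i) + ε := by
        have := phi_sum_le hA1 t z hz; linarith
    _ ≤ ∑' i, φ (z i) + ε := by
        have := Summable.sum_le_tsum t (fun i _ => hA1.nonneg _ (hz i)) hsumφ; linarith


end Phi

section Meas

variable {α : Type*} [TopologicalSpace α] [MeasurableSpace α] [BorelSpace α]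
  [T2Space α] [CompactSpace α] [TopologicalSpace.PseudoMetrizableSpace α]

variable {α : Type*} [TopologicalSpace α] [MeasurableSpace α] [BorelSpace α]
  [T2Space α] [CompactSpace α] [TopologicalSpace.PseudoMetrizableSpace α]

instance tv_finite {α : Type*} [MeasurableSpace α] (ν : SignedMeasure α) :
    IsFiniteMeasure ν.totalVariation := by
  rw [SignedMeasure.totalVariation]; infer_instance

lemma tv_toReal_add {α : Type*} [MeasurableSpace α] (ν : SignedMeasure α) (s : Set α) :
    (ν.totalVariation s).toReal =
      (ν.toJordanDecomposition.posPart s).toReal +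
        (ν.toJordanDecomposition.negPart s).toReal := by
  rw [show ν.totalVariation s = ν.toJordanDecomposition.posPart s
      + ν.toJordanDecomposition.negPart s from rfl,
    ENNReal.toReal_add (measure_ne_top _ _) (measure_ne_top _ _)]


lemma setIntegral_split (m : Measure α) [IsFiniteMeasure m] {U K : Set α}
    (hU : MeasurableSet U) (hK : IsClosed K) (hKU : K ⊆ U) (g : C(α, ℝ))
    (hg1 : ∀ x, |g x| ≤ 1) (hg0 : ∀ x ∉ U, g x = 0) (c : ℝ)
    (hc : ∀ x ∈ K, g x = c) :
    c * (m K).toReal - (m (U \ K)).toReal ≤ ∫ x, g x ∂m := by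
  have hint : Integrable (⇑g) m :=
    g.continuous.integrable_of_hasCompactSupport (isClosed_tsupport _).isCompact
  have heq : ∫ x, g x ∂m = ∫ x in U, g x ∂m := by
    rw [← integral_indicator hU]
    refine integral_congr_ae (Filter.Eventually.of_forall fun x => ?_)
    by_cases hx : x ∈ U
    · simp [Set.indicator_of_mem hx]
    · simp [Set.indicator_of_notMem hx, hg0 x hx]
  have hsplit : ∫ x in U, g x ∂m = (∫ x in K, g x ∂m) + ∫ x in U \ K, g x ∂m := by
    rw [← setIntegral_union (Set.disjoint_sdiff_right) (hU.diff hK.measurableSet)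
        hint.integrableOn hint.integrableOn, Set.union_diff_cancel hKU]
  have hK1 : ∫ x in K, g x ∂m = c * (m K).toReal := by
    rw [setIntegral_congr_fun hK.measurableSet hc, setIntegral_const, smul_eq_mul,
      mul_comm, measureReal_def]
  have hK2 : |∫ x in U \ K, g x ∂m| ≤ (m (U \ K)).toReal := by
    rw [← Real.norm_eq_abs]
    calc ‖∫ x in U \ K, g x ∂m‖ ≤ 1 * (m (U \ K)).toReal :=
          norm_setIntegral_le_of_norm_le_const (measure_lt_top m _)
            (fun x _ => by rw [Real.norm_eq_abs]; exact hg1 x)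
      _ = _ := one_mul _
  rw [heq, hsplit, hK1]
  linarith [(abs_le.1 hK2).1]

/-- Main test-function construction: the total variation of an open set is approximated
from below by the signed integral of a continuous function supported in `U`. -/
lemma exists_test (ν : SignedMeasure α) {U : Set α} (hUopen : IsOpen U)
    {ε : ℝ} (hε : 0 < ε) :
    ∃ g : C(α, ℝ), (∀ x, |g x| ≤ 1) ∧ (∀ x ∉ U, g x = 0) ∧
      (ν.totalVariation U).toReal ≤ sInt ν g + ε := by
  obtain ⟨S, hSm, hpS, hnSc⟩ := ν.toJordanDecomposition.mutuallySingular
  set p := ν.toJordanDecomposition.posPart with hp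
  set n := ν.toJordanDecomposition.negPart with hn
  have hε4 : ENNReal.ofReal (ε/4) ≠ 0 := by
    simp [ENNReal.ofReal_eq_zero]; linarith
  obtain ⟨Kp, hKpsub, hKpcl, hKpdiff⟩ :=
    (hUopen.measurableSet.inter hSm.compl).exists_isClosed_diff_lt
      (measure_ne_top p _) hε4
  obtain ⟨Kn, hKnsub, hKncl, hKndiff⟩ :=
    (hUopen.measurableSet.inter hSm).exists_isClosed_diff_lt
      (measure_ne_top n _) hε4
  have hKpU : Kp ⊆ U := hKpsub.trans Set.inter_subset_left
  have hKnU : Kn ⊆ U := hKnsub.trans Set.inter_subset_left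
  have hKpKn : Disjoint Kp Kn := by
    refine Set.disjoint_left.2 fun x hxp hxn => ?_
    exact (hKpsub hxp).2 (hKnsub hxn).2
  obtain ⟨gp, hgp0, hgp1, hgp01⟩ := exists_continuous_zero_one_of_isClosed
    (hKncl.union hUopen.isClosed_compl) hKpcl
    (by
      rw [Set.disjoint_union_left]
      exact ⟨hKpKn.symm, Set.disjoint_left.2 fun x hx hx2 => hx (hKpU hx2)⟩)
  obtain ⟨gn, hgn0, hgn1, hgn01⟩ := exists_continuous_zero_one_of_isClosed
    (hKpcl.union hUopen.isClosed_compl) hKncl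
    (by
      rw [Set.disjoint_union_left]
      exact ⟨hKpKn, Set.disjoint_left.2 fun x hx hx2 => hx (hKnU hx2)⟩)
  refine ⟨gp - gn, fun x => ?_, fun x hx => ?_, ?_⟩
  · have h1 := hgp01 x; have h2 := hgn01 x
    simp only [Set.mem_Icc] at h1 h2
    simp only [ContinuousMap.sub_apply]
    rw [abs_le]; constructor <;> linarith
  · have h1 : gp x = 0 := hgp0 (Set.mem_union_right _ hx)
    have h2 : gn x = 0 := hgn0 (Set.mem_union_right _ hx)
    simp [ContinuousMap.sub_apply, h1, h2]
  · -- the integral estimate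
    set g : C(α, ℝ) := gp - gn with hg
    have hg1 : ∀ x, |g x| ≤ 1 := fun x => by
      have h1 := hgp01 x; have h2 := hgn01 x
      simp only [Set.mem_Icc] at h1 h2
      simp only [hg, ContinuousMap.sub_apply]
      rw [abs_le]; constructor <;> linarith
    have hg0 : ∀ x ∉ U, g x = 0 := fun x hx => by
      have h1 : gp x = 0 := hgp0 (Set.mem_union_right _ hx)
      have h2 : gn x = 0 := hgn0 (Set.mem_union_right _ hx)
      simp [hg, ContinuousMap.sub_apply, h1, h2]
    have hIp := setIntegral_split p hUopen.measurableSet hKpcl hKpU g hg1 hg0 1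
      (fun x hx => by
        have h1 : gp x = 1 := hgp1 hx
        have h2 : gn x = 0 := hgn0 (Set.mem_union_left _ hx)
        simp [hg, ContinuousMap.sub_apply, h1, h2])
    have hIn := setIntegral_split n hUopen.measurableSet hKncl hKnU (-g)
      (fun x => by rw [ContinuousMap.neg_apply, abs_neg]; exact hg1 x)
      (fun x hx => by rw [ContinuousMap.neg_apply, hg0 x hx, neg_zero]) 1
      (fun x hx => by
        have h1 : gp x = 0 := hgp0 (Set.mem_union_left _ hx)
        have h2 : gn x = 1 := hgn1 hx
        simp [hg, ContinuousMap.neg_apply, ContinuousMap.sub_apply, h1, h2])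
    have hIn' : ∫ x, (-g) x ∂n = - ∫ x, g x ∂n := by
      simp only [ContinuousMap.neg_apply]
      rw [integral_neg]
    rw [hIn'] at hIn
    -- measure bounds
    have hpdiff : (p (U \ Kp)).toReal ≤ ε/4 := by
      have hsub : U \ Kp ⊆ ((U ∩ Sᶜ) \ Kp) ∪ (U ∩ S) := by
        intro x hx
        by_cases hxS : x ∈ S
        · exact Or.inr ⟨hx.1, hxS⟩
        · exact Or.inl ⟨⟨hx.1, hxS⟩, hx.2⟩
      have : p (U \ Kp) ≤ ENNReal.ofReal (ε/4) := by
        calc p (U \ Kp) ≤ p (((U ∩ Sᶜ) \ Kp) ∪ (U ∩ S)) := measure_mono hsub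
          _ ≤ p ((U ∩ Sᶜ) \ Kp) + p (U ∩ S) := measure_union_le _ _
          _ ≤ p ((U ∩ Sᶜ) \ Kp) + 0 := by
              gcongr
              exact le_trans (measure_mono Set.inter_subset_right) hpS.le
          _ ≤ ENNReal.ofReal (ε/4) := by rw [add_zero]; exact hKpdiff.le
      calc (p (U \ Kp)).toReal ≤ (ENNReal.ofReal (ε/4)).toReal :=
            ENNReal.toReal_mono ENNReal.ofReal_ne_top this
        _ = ε/4 := ENNReal.toReal_ofReal (by linarith)
    have hndiff : (n (U \ Kn)).toReal ≤ ε/4 := by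
      have hsub : U \ Kn ⊆ ((U ∩ S) \ Kn) ∪ (U ∩ Sᶜ) := by
        intro x hx
        by_cases hxS : x ∈ S
        · exact Or.inl ⟨⟨hx.1, hxS⟩, hx.2⟩
        · exact Or.inr ⟨hx.1, hxS⟩
      have : n (U \ Kn) ≤ ENNReal.ofReal (ε/4) := by
        calc n (U \ Kn) ≤ n (((U ∩ S) \ Kn) ∪ (U ∩ Sᶜ)) := measure_mono hsub
          _ ≤ n ((U ∩ S) \ Kn) + n (U ∩ Sᶜ) := measure_union_le _ _
          _ ≤ n ((U ∩ S) \ Kn) + 0 := by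
              gcongr
              exact le_trans (measure_mono Set.inter_subset_right) hnSc.le
          _ ≤ ENNReal.ofReal (ε/4) := by rw [add_zero]; exact hKndiff.le
      calc (n (U \ Kn)).toReal ≤ (ENNReal.ofReal (ε/4)).toReal :=
            ENNReal.toReal_mono ENNReal.ofReal_ne_top this
        _ = ε/4 := ENNReal.toReal_ofReal (by linarith)
    have hpU : (p U).toReal ≤ (p Kp).toReal + (p (U \ Kp)).toReal := by
      rw [← ENNReal.toReal_add (measure_ne_top _ _) (measure_ne_top _ _)]
      refine ENNReal.toReal_mono (by finiteness) ?_
      exact le_trans (measure_mono (by rw [Set.union_diff_cancel hKpU])) (measure_union_le _ _)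
    have hnU : (n U).toReal ≤ (n Kn).toReal + (n (U \ Kn)).toReal := by
      rw [← ENNReal.toReal_add (measure_ne_top _ _) (measure_ne_top _ _)]
      refine ENNReal.toReal_mono (by finiteness) ?_
      exact le_trans (measure_mono (by rw [Set.union_diff_cancel hKnU])) (measure_union_le _ _)
    rw [tv_toReal_add, ← hp, ← hn]
    unfold sInt
    rw [← hp, ← hn]
    change _ ≤ (∫ x, g x ∂p) - (∫ x, g x ∂n) + ε
    linarith


lemma abs_sInt_le (ν : SignedMeasure α) (g : C(α, ℝ)) :
    |sInt ν g| ≤ ‖g‖ * (ν.totalVariation Set.univ).toReal := by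
  have h1 : ‖∫ x, g x ∂ν.toJordanDecomposition.posPart‖ ≤
      ‖g‖ * (ν.toJordanDecomposition.posPart Set.univ).toReal :=
    norm_integral_le_of_norm_le_const
      (Filter.Eventually.of_forall fun x => g.norm_coe_le_norm x)
  have h2 : ‖∫ x, g x ∂ν.toJordanDecomposition.negPart‖ ≤
      ‖g‖ * (ν.toJordanDecomposition.negPart Set.univ).toReal :=
    norm_integral_le_of_norm_le_const
      (Filter.Eventually.of_forall fun x => g.norm_coe_le_norm x)
  rw [tv_toReal_add]
  rw [Real.norm_eq_abs] at h1 h2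
  unfold sInt
  have e1 := (abs_le.1 h1).1
  have e2 := (abs_le.1 h1).2
  have e3 := (abs_le.1 h2).1
  have e4 := (abs_le.1 h2).2
  rw [abs_le]; constructor <;> nlinarith

lemma sInt_le_tv (ν : SignedMeasure α) {U : Set α} (hU : MeasurableSet U)
    (g : C(α, ℝ)) (hg1 : ∀ x, |g x| ≤ 1) (hg0 : ∀ x ∉ U, g x = 0) :
    sInt ν g ≤ (ν.totalVariation U).toReal := by
  have key : ∀ m : Measure α, IsFiniteMeasure m → |∫ x, g x ∂m| ≤ (m U).toReal := by
    intro m hm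
    have heq : ∫ x, g x ∂m = ∫ x in U, g x ∂m := by
      rw [← integral_indicator hU]
      refine integral_congr_ae (Filter.Eventually.of_forall fun x => ?_)
      by_cases hx : x ∈ U
      · simp [Set.indicator_of_mem hx]
      · simp [Set.indicator_of_notMem hx, hg0 x hx]
    rw [heq, ← Real.norm_eq_abs]
    calc ‖∫ x in U, g x ∂m‖ ≤ 1 * (m U).toReal :=
          norm_setIntegral_le_of_norm_le_const (measure_lt_top m U)
            (fun x _ => by rw [Real.norm_eq_abs]; exact hg1 x)
      _ = (m U).toReal := one_mul _
  have h1 := key ν.toJordanDecomposition.posPart inferInstance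
  have h2 := key ν.toJordanDecomposition.negPart inferInstance
  rw [tv_toReal_add]
  unfold sInt
  linarith [(abs_le.1 h1).1, (abs_le.1 h1).2, (abs_le.1 h2).1, (abs_le.1 h2).2]

noncomputable def sIntCLM (ν : SignedMeasure α) : C(α, ℝ) →L[ℝ] ℝ :=
  LinearMap.mkContinuous
    { toFun := fun g => sInt ν g
      map_add' := fun g h => by
        unfold sInt
        have ip1 := (g.continuous.integrable_of_hasCompactSupport
          (isClosed_tsupport _).isCompact : Integrable (⇑g) ν.toJordanDecomposition.posPart)
        have ip2 := (h.continuous.integrable_of_hasCompactSupport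
          (isClosed_tsupport _).isCompact : Integrable (⇑h) ν.toJordanDecomposition.posPart)
        have in1 := (g.continuous.integrable_of_hasCompactSupport
          (isClosed_tsupport _).isCompact : Integrable (⇑g) ν.toJordanDecomposition.negPart)
        have in2 := (h.continuous.integrable_of_hasCompactSupport
          (isClosed_tsupport _).isCompact : Integrable (⇑h) ν.toJordanDecomposition.negPart)
        simp only [ContinuousMap.add_apply]
        rw [integral_add ip1 ip2, integral_add in1 in2]
        ring
      map_smul' := fun c g => by
        unfold sInt
        simp only [ContinuousMap.smul_apply, smul_eq_mul, RingHom.id_apply]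
        rw [integral_const_mul, integral_const_mul]
        ring }
    ((ν.totalVariation Set.univ).toReal)
    (fun g => by
      have := abs_sInt_le ν g
      rw [mul_comm] at this
      simpa [Real.norm_eq_abs] using this)

lemma sIntCLM_apply (ν : SignedMeasure α) (g : C(α, ℝ)) : sIntCLM ν g = sInt ν g := rfl

lemma exists_tv_bound (μs : ℕ → SignedMeasure α) (μ : SignedMeasure α)
    (hconv : ∀ g : C(α, ℝ),
      Filter.Tendsto (fun k => sInt (μs k) g) Filter.atTop (nhds (sInt μ g))) :
    ∃ C : ℝ, ∀ k, ((μs k).totalVariation Set.univ).toReal ≤ C := by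
  have hpt : ∀ g : C(α, ℝ), ∃ c, ∀ k, ‖sIntCLM (μs k) g‖ ≤ c := by
    intro g
    obtain ⟨c, hc⟩ := ((hconv g).norm).bddAbove_range
    exact ⟨c, fun k => hc ⟨k, rfl⟩⟩
  obtain ⟨C', hC'⟩ := banach_steinhaus hpt
  have hC'0 : 0 ≤ C' := le_trans (norm_nonneg _) (hC' 0)
  refine ⟨C' + 1, fun k => ?_⟩
  obtain ⟨g, hg1, hg0, hgle⟩ := exists_test (μs k) isOpen_univ one_pos
  have hgnorm : ‖g‖ ≤ 1 :=
    (ContinuousMap.norm_le _ zero_le_one).2 fun x => by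
      rw [Real.norm_eq_abs]; exact hg1 x
  have : sInt (μs k) g ≤ C' := by
    calc sInt (μs k) g ≤ |sInt (μs k) g| := le_abs_self _
      _ = ‖sIntCLM (μs k) g‖ := by rw [sIntCLM_apply, Real.norm_eq_abs]
      _ ≤ ‖sIntCLM (μs k)‖ * ‖g‖ := (sIntCLM (μs k)).le_opNorm g
      _ ≤ C' * 1 := mul_le_mul (hC' k) hgnorm (norm_nonneg _) hC'0
      _ = C' := mul_one _
  linarith

lemma eventual_tv_lb (μs : ℕ → SignedMeasure α) (μ : SignedMeasure α)
    (hconv : ∀ g : C(α, ℝ),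
      Filter.Tendsto (fun k => sInt (μs k) g) Filter.atTop (nhds (sInt μ g)))
    {U : Set α} (hU : IsOpen U) {ε : ℝ} (hε : 0 < ε) :
    ∀ᶠ k in Filter.atTop,
      (μ.totalVariation U).toReal - ε ≤ ((μs k).totalVariation U).toReal := by
  obtain ⟨g, hg1, hg0, hgle⟩ := exists_test μ hU (half_pos hε)
  have hev : ∀ᶠ k in Filter.atTop, sInt μ g - ε/2 < sInt (μs k) g :=
    (hconv g).eventually (eventually_gt_nhds (by linarith))
  filter_upwards [hev] with k hk
  have := sInt_le_tv (μs k) hU.measurableSet g hg1 hg0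
  linarith


end Meas

section Atoms

variable {α : Type*} [MeasurableSpace α] [MeasurableSingletonClass α]

lemma atoms_countable (ν : SignedMeasure α) : (atomsOf ν).Countable := by
  have h := Measure.countable_meas_pos_of_disjoint_of_meas_iUnion_ne_top
    (μ := ν.totalVariation) (As := fun x : α => {x})
    (fun _ => MeasurableSet.singleton _)
    (fun x y hxy => by simpa [Function.onFun] using hxy)
    (by simp [measure_ne_top])
  refine h.mono fun x hx => ?_
  exact pos_iff_ne_zero.2 hx

lemma tv_eq_tsum (ν : SignedMeasure α) {s : Set α} (hs : s.Countable) :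
    ν.totalVariation s = ∑' ω : s, ν.totalVariation {(ω : α)} := by
  conv_lhs => rw [← Set.biUnion_of_singleton s]
  exact measure_biUnion hs
    (fun x _ y _ hxy => by simpa [Function.onFun] using hxy)
    (fun b _ => MeasurableSet.singleton b)

lemma tv_summable (ν : SignedMeasure α) {s : Set α} (hs : s.Countable) :
    Summable (fun ω : s => (ν.totalVariation {(ω : α)}).toReal) := by
  apply ENNReal.summable_toReal
  rw [← tv_eq_tsum ν hs]
  exact measure_ne_top _ _

lemma tv_toReal_tsum (ν : SignedMeasure α) {s : Set α} (hs : s.Countable) :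
    (ν.totalVariation s).toReal = ∑' ω : s, (ν.totalVariation {(ω : α)}).toReal := by
  rw [tv_eq_tsum ν hs, ENNReal.tsum_toReal_eq (fun _ => measure_ne_top _ _)]


variable {φ φD : ℝ → ℝ} {γ : ℝ}

lemma phiPen_nonneg (hA1 : A1 φ φD γ) (ν : SignedMeasure α) : 0 ≤ PhiPen φ ν := by
  unfold PhiPen
  have h1 : (0:ℝ) ≤ (ν.totalVariation (atomsOf ν)ᶜ).toReal := ENNReal.toReal_nonneg
  have h2 : (0:ℝ) ≤ ∑' ω : atomsOf ν, φ (ν.totalVariation {(ω : α)}).toReal :=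
    tsum_nonneg fun ω => hA1.nonneg _ ENNReal.toReal_nonneg
  linarith

lemma phi_atoms_summable (hA1 : A1 φ φD γ) (ν : SignedMeasure α) {s : Set α}
    (hs : s.Countable) :
    Summable (fun ω : s => φ (ν.totalVariation {(ω : α)}).toReal) :=
  Summable.of_nonneg_of_le (fun ω => hA1.nonneg _ ENNReal.toReal_nonneg)
    (fun ω => phi_le_id hA1 ENNReal.toReal_nonneg) (tv_summable ν hs)

lemma phiPen_le_tv (hA1 : A1 φ φD γ) (ν : SignedMeasure α) :
    PhiPen φ ν ≤ (ν.totalVariation Set.univ).toReal := by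
  have hAc := atoms_countable ν
  have hAm : MeasurableSet (atomsOf ν) := hAc.measurableSet
  have h1 : ∑' ω : atomsOf ν, φ (ν.totalVariation {(ω : α)}).toReal ≤
      (ν.totalVariation (atomsOf ν)).toReal := by
    rw [tv_toReal_tsum ν hAc]
    exact Summable.tsum_le_tsum (fun ω => phi_le_id hA1 ENNReal.toReal_nonneg)
      (phi_atoms_summable hA1 ν hAc) (tv_summable ν hAc)
  have h2 : (ν.totalVariation (atomsOf ν)ᶜ).toReal + (ν.totalVariation (atomsOf ν)).toReal
      = (ν.totalVariation Set.univ).toReal := by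
    rw [← ENNReal.toReal_add (measure_ne_top _ _) (measure_ne_top _ _),
      add_comm, measure_add_measure_compl hAm]
  unfold PhiPen
  linarith

/-- **Key upper bound**: for finitely many pairwise disjoint measurable sets,
the sum of `φ` of their masses is at most `Φ`. -/
lemma sum_phi_le_phiPen (hA1 : A1 φ φD γ) (ν : SignedMeasure α) {ι : Type*}
    (s : Finset ι) (W : ι → Set α) (hmeas : ∀ i ∈ s, MeasurableSet (W i))
    (hdisj : ∀ i ∈ s, ∀ j ∈ s, i ≠ j → Disjoint (W i) (W j)) :
    ∑ i ∈ s, φ (ν.totalVariation (W i)).toReal ≤ PhiPen φ ν := by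
  classical
  set A := atomsOf ν with hA
  have hAc : A.Countable := atoms_countable ν
  have hAm : MeasurableSet A := hAc.measurableSet
  set h' : α → ℝ := fun ω => φ (ν.totalVariation {ω}).toReal with hh'
  have hh'nonneg : ∀ ω, 0 ≤ h' ω := fun ω => hA1.nonneg _ ENNReal.toReal_nonneg
  have hSA : Summable (fun ω : A => h' ω) := phi_atoms_summable hA1 ν hAc
  have hSIA : Summable (A.indicator h') := summable_subtype_iff_indicator.1 hSA
  have hind_le : ∀ i ω, (A ∩ W i).indicator h' ω ≤ A.indicator h' ω := by
    intro i ω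
    by_cases hω : ω ∈ A ∩ W i
    · rw [Set.indicator_of_mem hω, Set.indicator_of_mem hω.1]
    · rw [Set.indicator_of_notMem hω]
      exact Set.indicator_apply_nonneg fun _ => hh'nonneg _
  have hSind : ∀ i ∈ s, Summable ((A ∩ W i).indicator h') := fun i _ =>
    Summable.of_nonneg_of_le
      (fun ω => Set.indicator_apply_nonneg fun _ => hh'nonneg _)
      (fun ω => hind_le i ω) hSIA
  -- Step 1: per-index bound
  have step1 : ∀ i ∈ s, φ (ν.totalVariation (W i)).toReal ≤
      (ν.totalVariation (W i ∩ Aᶜ)).toReal + ∑' ω : α, (A ∩ W i).indicator h' ω := by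
    intro i hi
    have hAWc : (A ∩ W i).Countable := hAc.mono Set.inter_subset_left
    have hsplit : (ν.totalVariation (W i)).toReal =
        (ν.totalVariation (W i ∩ Aᶜ)).toReal + (ν.totalVariation (A ∩ W i)).toReal := by
      rw [← ENNReal.toReal_add (measure_ne_top _ _) (measure_ne_top _ _)]
      congr 1
      have := measure_inter_add_diff (μ := ν.totalVariation) (W i) hAm
      rw [Set.diff_eq] at this
      rw [Set.inter_comm A (W i), ← this, add_comm]
    have htsum : (ν.totalVariation (A ∩ W i)).toReal =
        ∑' ω : ↥(A ∩ W i), (ν.totalVariation {(ω : α)}).toReal := tv_toReal_tsum ν hAWc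
    have hphit : φ ((ν.totalVariation (A ∩ W i)).toReal) ≤
        ∑' ω : α, (A ∩ W i).indicator h' ω := by
      rw [htsum, ← tsum_subtype (A ∩ W i) h']
      exact phi_tsum_le hA1 _ (fun _ => ENNReal.toReal_nonneg) (tv_summable ν hAWc)
    calc φ (ν.totalVariation (W i)).toReal
        = φ ((ν.totalVariation (W i ∩ Aᶜ)).toReal
            + (ν.totalVariation (A ∩ W i)).toReal) := by rw [← hsplit]
      _ ≤ (ν.totalVariation (W i ∩ Aᶜ)).toReal
            + φ ((ν.totalVariation (A ∩ W i)).toReal) :=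
          phi_add_le hA1 ENNReal.toReal_nonneg ENNReal.toReal_nonneg
      _ ≤ _ := by linarith
  -- Step 2: diffuse parts
  have step2 : ∑ i ∈ s, (ν.totalVariation (W i ∩ Aᶜ)).toReal ≤
      (ν.totalVariation Aᶜ).toReal := by
    have hEN : ∑ i ∈ s, ν.totalVariation (W i ∩ Aᶜ) =
        ν.totalVariation (⋃ i ∈ s, W i ∩ Aᶜ) := by
      rw [measure_biUnion_finset
        (fun i hi j hj hij => (hdisj i hi j hj hij).mono
          Set.inter_subset_left Set.inter_subset_left)
        (fun i hi => (hmeas i hi).inter hAm.compl)]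
    have hle : ν.totalVariation (⋃ i ∈ s, W i ∩ Aᶜ) ≤ ν.totalVariation Aᶜ :=
      measure_mono (Set.iUnion₂_subset fun i _ => Set.inter_subset_right)
    rw [← ENNReal.toReal_sum (fun i _ => measure_ne_top _ _)]
    exact ENNReal.toReal_mono (measure_ne_top _ _) (hEN ▸ hle)
  -- Step 3: atomic parts
  have pointwise : ∀ ω, ∑ i ∈ s, (A ∩ W i).indicator h' ω ≤ A.indicator h' ω := by
    intro ω
    by_cases hω : ∃ i ∈ s, ω ∈ W i
    · obtain ⟨i₀, hi₀s, hi₀⟩ := hω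
      have heq : ∑ i ∈ s, (A ∩ W i).indicator h' ω = (A ∩ W i₀).indicator h' ω :=
        Finset.sum_eq_single_of_mem i₀ hi₀s fun j hj hne => by
          rw [Set.indicator_of_notMem]
          intro hmem
          exact Set.disjoint_left.1 (hdisj j hj i₀ hi₀s hne) hmem.2 hi₀
      rw [heq]; exact hind_le i₀ ω
    · push_neg at hω
      rw [Finset.sum_eq_zero fun i hi =>
        Set.indicator_of_notMem (fun hmem => hω i hi hmem.2) _]
      exact Set.indicator_apply_nonneg fun _ => hh'nonneg _
  have step3 : ∑ i ∈ s, ∑' ω : α, (A ∩ W i).indicator h' ω ≤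
      ∑' ω : α, A.indicator h' ω := by
    rw [← Summable.tsum_finsetSum hSind]
    exact Summable.tsum_le_tsum pointwise (summable_sum hSind) hSIA
  -- Conclusion
  calc ∑ i ∈ s, φ (ν.totalVariation (W i)).toReal
      ≤ ∑ i ∈ s, ((ν.totalVariation (W i ∩ Aᶜ)).toReal
          + ∑' ω : α, (A ∩ W i).indicator h' ω) := Finset.sum_le_sum step1
    _ = (∑ i ∈ s, (ν.totalVariation (W i ∩ Aᶜ)).toReal)
          + ∑ i ∈ s, ∑' ω : α, (A ∩ W i).indicator h' ω := Finset.sum_add_distrib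
    _ ≤ (ν.totalVariation Aᶜ).toReal + ∑' ω : α, A.indicator h' ω :=
          add_le_add step2 step3
    _ = PhiPen φ ν := by
          rw [PhiPen, ← tsum_subtype A h']

end Atoms

section Construction

variable {α : Type*} [TopologicalSpace α] [MeasurableSpace α] [BorelSpace α]
  [T2Space α] [CompactSpace α] [TopologicalSpace.PseudoMetrizableSpace α]
  {φ φD : ℝ → ℝ} {γ : ℝ}

lemma exists_disjoint_opens {ι : Type*} (s : Finset ι) (K : ι → Set α)
    (hK : ∀ i ∈ s, IsCompact (K i))
    (hdisj : ∀ i ∈ s, ∀ j ∈ s, i ≠ j → Disjoint (K i) (K j)) :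
    ∃ W : ι → Set α, (∀ i, IsOpen (W i)) ∧ (∀ i ∈ s, K i ⊆ W i) ∧
      (∀ i ∈ s, ∀ j ∈ s, i ≠ j → Disjoint (W i) (W j)) := by
  classical
  have hsep : ∀ i j : ι, ∃ UV : Set α × Set α,
      IsOpen UV.1 ∧ IsOpen UV.2 ∧ K i ⊆ UV.1 ∧ K j ⊆ UV.2 ∧
        (i ∈ s → j ∈ s → i ≠ j → Disjoint UV.1 UV.2) := by
    intro i j
    by_cases h : i ∈ s ∧ j ∈ s ∧ i ≠ j
    · obtain ⟨U, V, hUo, hVo, hKU, hKV, hUV⟩ :=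
        SeparatedNhds.of_isCompact_isCompact (hK i h.1) (hK j h.2.1)
          (hdisj i h.1 j h.2.1 h.2.2)
      exact ⟨(U, V), hUo, hVo, hKU, hKV, fun _ _ _ => hUV⟩
    · exact ⟨(Set.univ, Set.univ), isOpen_univ, isOpen_univ, Set.subset_univ _,
        Set.subset_univ _, fun h1 h2 h3 => absurd ⟨h1, h2, h3⟩ h⟩
  choose UV hUo hVo hKU hKV hUVd using hsep
  refine ⟨fun i => ⋂ j ∈ s.erase i, ((UV i j).1 ∩ (UV j i).2), ?_, ?_, ?_⟩
  · exact fun i => isOpen_biInter_finset fun j _ => (hUo i j).inter (hVo j i)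
  · exact fun i _ => Set.subset_iInter₂ fun j _ =>
      Set.subset_inter (hKU i j) (hKV j i)
  · intro i hi j hj hne
    have h1 : (⋂ k ∈ s.erase i, ((UV i k).1 ∩ (UV k i).2)) ⊆ (UV i j).1 :=
      (Set.biInter_subset_of_mem (Finset.mem_erase.2 ⟨hne.symm, hj⟩)).trans
        Set.inter_subset_left
    have h2 : (⋂ k ∈ s.erase j, ((UV j k).1 ∩ (UV k j).2)) ⊆ (UV i j).2 :=
      (Set.biInter_subset_of_mem (Finset.mem_erase.2 ⟨hne, hi⟩)).trans
        Set.inter_subset_right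
    exact (hUVd i j hi hj hne).mono h1 h2

/-- **Key construction**: a finite family of pairwise disjoint open sets whose
`φ`-masses almost recover `Φ(μ)`. -/
lemma exists_good_family (hA1 : A1 φ φD γ) (μ : SignedMeasure α) {ε : ℝ} (hε : 0 < ε) :
    ∃ (s : Finset (ℕ ⊕ α)) (W : ℕ ⊕ α → Set α),
      (∀ i, IsOpen (W i)) ∧
      (∀ i ∈ s, ∀ j ∈ s, i ≠ j → Disjoint (W i) (W j)) ∧
      PhiPen φ μ ≤ (∑ i ∈ s, φ (μ.totalVariation (W i)).toReal) + ε := by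
  classical
  set A := atomsOf μ with hAdef
  have hAc : A.Countable := atoms_countable μ
  have hAm : MeasurableSet A := hAc.measurableSet
  set h' : α → ℝ := fun ω => φ (μ.totalVariation {ω}).toReal with hh'
  have hh'nonneg : ∀ ω, 0 ≤ h' ω := fun ω => hA1.nonneg _ ENNReal.toReal_nonneg
  have hSA : Summable (fun ω : A => h' ω) := phi_atoms_summable hA1 μ hAc
  have hSIA : Summable (A.indicator h') := summable_subtype_iff_indicator.1 hSA
  set S : ℝ := ∑' ω : α, A.indicator h' ω with hSdef
  set D : ℝ := (μ.totalVariation Aᶜ).toReal with hDdef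
  have hPhi : PhiPen φ μ = D + S := by
    rw [PhiPen, hSdef, ← tsum_subtype A h']
  -- atom finset
  obtain ⟨t, ht⟩ := (hSIA.hasSum.eventually
    (Metric.ball_mem_nhds S (by linarith : (0:ℝ) < ε/4))).exists
  rw [Real.dist_eq, abs_lt] at ht
  set tA := t.filter (· ∈ A) with htAdef
  have htAsub : ∀ a ∈ tA, a ∈ A := fun a ha => (Finset.mem_filter.1 ha).2
  have htAsum : S - ε/4 ≤ ∑ a ∈ tA, h' a := by
    have heq : ∑ a ∈ tA, h' a = ∑ ω ∈ t, A.indicator h' ω := by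
      rw [htAdef, Finset.sum_filter]
      exact Finset.sum_congr rfl fun ω _ => (Set.indicator_apply A h' ω).symm
    rw [heq]; linarith [ht.1]
  -- diffuse measure
  set ν := μ.totalVariation.restrict Aᶜ with hνdef
  haveI hνfin : IsFiniteMeasure ν :=
    ⟨by rw [hνdef, Measure.restrict_apply_univ]; exact measure_lt_top _ _⟩
  haveI hνnoatom : MeasureTheory.NullSingletonClass ν := by
    constructor
    intro x
    rw [hνdef, Measure.restrict_apply (measurableSet_singleton x)]
    by_cases hx : x ∈ A
    · rw [Set.singleton_inter_eq_empty.2 (by simpa using hx)]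
      exact measure_empty
    · have hsub : ({x} : Set α) ∩ Aᶜ = {x} :=
        Set.inter_eq_self_of_subset_left (Set.singleton_subset_iff.2 hx)
      rw [hsub]
      simpa [hAdef, atomsOf] using hx
  have hν_le : ∀ u : Set α, ν u ≤ μ.totalVariation u := fun u =>
    Measure.restrict_apply_le _ _
  have hνuniv : (ν Set.univ).toReal = D := by
    rw [hνdef, Measure.restrict_apply_univ]
  -- choice of ε' and δ
  have hD0 : 0 ≤ D := ENNReal.toReal_nonneg
  set ε' : ℝ := min (1/2) (ε/(4*(D+1))) with hε'def
  have hε'pos : 0 < ε' := lt_min (by norm_num) (by positivity)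
  have hε'le : ε' ≤ 1/2 := min_le_left _ _
  have hε'D : ε' * D ≤ ε/4 := by
    have h1 : ε' ≤ ε/(4*(D+1)) := min_le_right _ _
    have h2 : ε' * D ≤ (ε/(4*(D+1))) * D :=
      mul_le_mul_of_nonneg_right h1 hD0
    have h3 : (ε/(4*(D+1))) * D ≤ ε/4 := by
      rw [div_mul_eq_mul_div, div_le_div_iff₀ (by positivity) (by norm_num : (0:ℝ) < 4)]
      nlinarith
    linarith
  obtain ⟨δ, hδpos, hδ⟩ := phi_small hA1 hε'pos
  -- open cover by sets of small ν-measure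
  have hcov : ∀ x : α, ∃ U : Set α, x ∈ U ∧ IsOpen U ∧ ν U ≤ ENNReal.ofReal δ := by
    intro x
    have h0 : ν {x} < ENNReal.ofReal δ := by
      rw [measure_singleton]
      exact ENNReal.ofReal_pos.2 hδpos
    obtain ⟨U, hU1, hU2, hU3⟩ := Set.exists_isOpen_lt_of_lt {x} _ h0
    exact ⟨U, hU1 rfl, hU2, hU3.le⟩
  choose Ux hxUx hUxo hUxν using hcov
  obtain ⟨t₀, ht₀⟩ := isCompact_univ.elim_finite_subcover Ux hUxo
    (fun x _ => Set.mem_iUnion.2 ⟨x, hxUx x⟩)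
  set L := t₀.toList with hLdef
  set Useq : ℕ → Set α := fun m => if h : m < L.length then Ux (L.get ⟨m, h⟩) else ∅
    with hUseq
  have hUseqo : ∀ m, IsOpen (Useq m) := by
    intro m; rw [hUseq]; dsimp only
    by_cases h : m < L.length
    · rw [dif_pos h]; exact hUxo _
    · rw [dif_neg h]; exact isOpen_empty
  have hUseqν : ∀ m, ν (Useq m) ≤ ENNReal.ofReal δ := by
    intro m; rw [hUseq]; dsimp only
    by_cases h : m < L.length
    · rw [dif_pos h]; exact hUxν _
    · rw [dif_neg h]; simp
  have hUseqcov : (Set.univ : Set α) ⊆ ⋃ m, Useq m := by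
    intro x _
    obtain ⟨y, hyt, hxy⟩ := Set.mem_iUnion₂.1 (ht₀ (Set.mem_univ x))
    have hymem : y ∈ L := by rw [hLdef]; exact Finset.mem_toList.2 hyt
    obtain ⟨n, hn, hgetn⟩ := List.mem_iff_getElem.1 hymem
    refine Set.mem_iUnion.2 ⟨n, ?_⟩
    rw [hUseq]
    dsimp only
    rw [dif_pos hn]
    have : L.get ⟨n, hn⟩ = y := hgetn
    rw [this]
    exact hxy
  set E : ℕ → Set α := disjointed Useq with hEdef
  have hEmeas : ∀ m, MeasurableSet (E m) :=
    MeasurableSet.disjointed fun m => (hUseqo m).measurableSet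
  have hEν : ∀ m, ν (E m) ≤ ENNReal.ofReal δ := fun m =>
    le_trans (measure_mono (disjointed_subset _ _)) (hUseqν m)
  have hEdisj : ∀ m m' : ℕ, m ≠ m' → Disjoint (E m) (E m') := fun m m' h =>
    disjoint_disjointed Useq h
  have hEcov : ⋃ m ∈ Finset.range L.length, E m = Set.univ := by
    apply Set.eq_univ_of_univ_subset
    intro x hx
    have hx2 : x ∈ ⋃ m, E m := by
      rw [hEdef, iUnion_disjointed]; exact hUseqcov hx
    obtain ⟨m, hm⟩ := Set.mem_iUnion.1 hx2
    have hmM : m < L.length := by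
      by_contra hge
      have hemp : Useq m = ∅ := by rw [hUseq]; dsimp only; rw [dif_neg hge]
      have := disjointed_subset Useq m hm
      rw [hemp] at this
      exact this
    exact Set.mem_biUnion (Finset.mem_range.2 hmM) hm
  -- closed approximations inside the pieces
  set εM : ℝ := ε/(4*(L.length+1)) with hεM
  have hεMpos : 0 < εM := by positivity
  have hclosed : ∀ m : ℕ, ∃ C, C ⊆ (E m \ ↑tA) ∧ IsClosed C ∧
      ν ((E m \ ↑tA) \ C) < ENNReal.ofReal εM := fun m =>
    ((hEmeas m).diff tA.finite_toSet.measurableSet).exists_isClosed_diff_lt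
      (measure_ne_top _ _) (ENNReal.ofReal_pos.2 hεMpos).ne'
  choose Cm hCsub hCcl hCdiff using hclosed
  have htAnull : ν ↑tA = 0 := tA.finite_toSet.countable.measure_zero ν
  have hCν : ∀ m, (ν (E m)).toReal ≤ (ν (Cm m)).toReal + εM := by
    intro m
    have h1 : ν (E m) = ν (E m \ ↑tA) := (measure_diff_null htAnull).symm
    have h2 : ν (E m \ ↑tA) ≤ ν (Cm m) + ν ((E m \ ↑tA) \ Cm m) :=
      le_trans (measure_mono (fun x hx => by
        by_cases h : x ∈ Cm m
        · exact Or.inl h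
        · exact Or.inr ⟨hx, h⟩)) (measure_union_le _ _)
    have h3 : ν (E m) ≤ ν (Cm m) + ENNReal.ofReal εM := by
      rw [h1]
      exact h2.trans (by gcongr; exact (hCdiff m).le)
    calc (ν (E m)).toReal ≤ ((ν (Cm m)) + ENNReal.ofReal εM).toReal :=
          ENNReal.toReal_mono (by finiteness) h3
      _ = (ν (Cm m)).toReal + εM := by
          rw [ENNReal.toReal_add (measure_ne_top _ _) ENNReal.ofReal_ne_top,
            ENNReal.toReal_ofReal hεMpos.le]
  -- the compact family and separation
  set K : ℕ ⊕ α → Set α := Sum.elim Cm (fun a => {a}) with hKdef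
  set s : Finset (ℕ ⊕ α) := (Finset.range L.length).disjSum tA with hsdef
  have hKc : ∀ i ∈ s, IsCompact (K i) := by
    intro i _
    rcases i with m | a
    · exact (hCcl m).isCompact
    · exact isCompact_singleton
  have hKd : ∀ i ∈ s, ∀ j ∈ s, i ≠ j → Disjoint (K i) (K j) := by
    intro i hi j hj hne
    rcases i with m | a <;> rcases j with m' | a'
    · have hmm' : m ≠ m' := by rintro rfl; exact hne rfl
      exact (hEdisj m m' hmm').mono ((hCsub m).trans Set.diff_subset)
        ((hCsub m').trans Set.diff_subset)
    · refine Set.disjoint_singleton_right.2 fun hmem => ?_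
      rw [hsdef] at hj
      exact ((hCsub m) hmem).2 (Finset.mem_coe.2 (Finset.inr_mem_disjSum.1 hj))
    · refine Set.disjoint_singleton_left.2 fun hmem => ?_
      rw [hsdef] at hi
      exact ((hCsub m') hmem).2 (Finset.mem_coe.2 (Finset.inr_mem_disjSum.1 hi))
    · have haa : a ≠ a' := by rintro rfl; exact hne rfl
      exact Set.disjoint_singleton.2 haa
  obtain ⟨W, hWo, hKW, hWdisj⟩ := exists_disjoint_opens s K hKc hKd
  refine ⟨s, W, hWo, hWdisj, ?_⟩
  rw [hPhi, hsdef, Finset.sum_disjSum]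
  -- atom part
  have hatom : ∑ a ∈ tA, h' a ≤
      ∑ a ∈ tA, φ (μ.totalVariation (W (Sum.inr a))).toReal := by
    apply Finset.sum_le_sum
    intro a ha
    have hmem : ({a} : Set α) ⊆ W (Sum.inr a) := by
      have := hKW (Sum.inr a) (by rw [hsdef]; exact Finset.inr_mem_disjSum.2 ha)
      simpa [hKdef] using this
    have hle : (μ.totalVariation {a}).toReal ≤
        (μ.totalVariation (W (Sum.inr a))).toReal :=
      ENNReal.toReal_mono (measure_ne_top _ _) (measure_mono hmem)
    exact hA1.mono (Set.mem_Ici.2 ENNReal.toReal_nonneg)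
      (Set.mem_Ici.2 ENNReal.toReal_nonneg) hle
  -- diffuse part
  have hdiff1 : ∀ m ∈ Finset.range L.length,
      (1 - ε') * (ν (Cm m)).toReal ≤ φ (μ.totalVariation (W (Sum.inl m))).toReal := by
    intro m hm
    have hz1 : (ν (Cm m)).toReal ≤ δ := by
      have hle := le_trans (measure_mono ((hCsub m).trans Set.diff_subset)) (hEν m)
      calc (ν (Cm m)).toReal ≤ (ENNReal.ofReal δ).toReal :=
            ENNReal.toReal_mono ENNReal.ofReal_ne_top hle
        _ = δ := ENNReal.toReal_ofReal hδpos.le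
    have h1 : (1-ε') * (ν (Cm m)).toReal ≤ φ (ν (Cm m)).toReal :=
      hδ _ ENNReal.toReal_nonneg hz1
    have h2 : (ν (Cm m)).toReal ≤ (μ.totalVariation (W (Sum.inl m))).toReal := by
      have hsub : Cm m ⊆ W (Sum.inl m) := by
        have := hKW (Sum.inl m) (by rw [hsdef]; exact Finset.inl_mem_disjSum.2 hm)
        simpa [hKdef] using this
      calc (ν (Cm m)).toReal ≤ (ν (W (Sum.inl m))).toReal :=
            ENNReal.toReal_mono (measure_ne_top _ _) (measure_mono hsub)
        _ ≤ (μ.totalVariation (W (Sum.inl m))).toReal :=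
            ENNReal.toReal_mono (measure_ne_top _ _) (hν_le _)
    exact h1.trans ((hA1.mono (Set.mem_Ici.2 ENNReal.toReal_nonneg)
      (Set.mem_Ici.2 ENNReal.toReal_nonneg) h2))
  have hsumE : D = ∑ m ∈ Finset.range L.length, (ν (E m)).toReal := by
    rw [← hνuniv, ← hEcov,
      measure_biUnion_finset (fun i _ j _ hij => hEdisj i j hij) (fun m _ => hEmeas m),
      ENNReal.toReal_sum (fun _ _ => measure_ne_top _ _)]
  have hMε : (L.length : ℝ) * εM ≤ ε/4 := by
    rw [hεM, mul_comm, div_mul_eq_mul_div,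
      div_le_div_iff₀ (by positivity) (by norm_num : (0:ℝ) < 4)]
    have := Nat.cast_nonneg (α := ℝ) L.length
    nlinarith
  have hsumC : D - ε/4 ≤ ∑ m ∈ Finset.range L.length, (ν (Cm m)).toReal := by
    have h1 : ∑ m ∈ Finset.range L.length, (ν (E m)).toReal ≤
        ∑ m ∈ Finset.range L.length, ((ν (Cm m)).toReal + εM) :=
      Finset.sum_le_sum fun m _ => hCν m
    rw [Finset.sum_add_distrib, Finset.sum_const, Finset.card_range,
      nsmul_eq_mul] at h1
    linarith [hsumE, hMε]
  have hdiffsum : D - ε/2 - ε'*D ≤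
      ∑ m ∈ Finset.range L.length, φ (μ.totalVariation (W (Sum.inl m))).toReal := by
    have h1 : (1-ε') * (D - ε/4) ≤
        (1-ε') * ∑ m ∈ Finset.range L.length, (ν (Cm m)).toReal :=
      mul_le_mul_of_nonneg_left hsumC (by linarith)
    rw [Finset.mul_sum] at h1
    have h3 : ∑ m ∈ Finset.range L.length, (1-ε') * (ν (Cm m)).toReal ≤
        ∑ m ∈ Finset.range L.length, φ (μ.totalVariation (W (Sum.inl m))).toReal :=
      Finset.sum_le_sum hdiff1
    nlinarith [hε.le, hε'pos.le, hD0]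
  linarith [htAsum.trans hatom, hdiffsum, hε'D]

end Construction

end PhiLSC

end Aux

/-- Let `φ` satisfy (A1). Then `Φ` is sequentially weak-* lower
semicontinuous on `M(Ω)` for compact `Ω ⊂ ℝ^{d+1}`: if `μ⁽ᵏ⁾ → μ` weak-*, i.e.
`∫ g dμ⁽ᵏ⁾ → ∫ g dμ` for every continuous `g : Ω → ℝ`, then
`liminf_k Φ(μ⁽ᵏ⁾) ≥ Φ(μ)`. -/
theorem PhiPen_weakStar_lsc (d : ℕ)
    (Ω : Set (EuclideanSpace ℝ (Fin (d + 1)))) (hΩ : IsCompact Ω)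
    (φ φD : ℝ → ℝ) (γ : ℝ) (hA1 : A1 φ φD γ)
    (μs : ℕ → SignedMeasure ↥Ω) (μ : SignedMeasure ↥Ω)
    (hconv : ∀ g : C(↥Ω, ℝ),
      Filter.Tendsto (fun k => sInt (μs k) g) Filter.atTop (nhds (sInt μ g))) :
    PhiPen φ μ ≤ Filter.liminf (fun k => PhiPen φ (μs k)) Filter.atTop := by
  classical
  haveI : CompactSpace ↥Ω := isCompact_iff_compactSpace.1 hΩ
  obtain ⟨C, hC⟩ := PhiLSC.exists_tv_bound μs μ hconv
  have hFle : ∀ k, PhiPen φ (μs k) ≤ C := fun k =>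
    (PhiLSC.phiPen_le_tv hA1 (μs k)).trans (hC k)
  have hcobdd : Filter.IsCoboundedUnder (· ≥ ·) Filter.atTop
      (fun k => PhiPen φ (μs k)) :=
    Filter.isCoboundedUnder_ge_of_le _ hFle
  refine le_of_forall_pos_le_add fun ε hε => ?_
  obtain ⟨s, W, hWo, hWdisj, hbound⟩ :=
    PhiLSC.exists_good_family hA1 μ (half_pos hε)
  set η : ℝ := ε/(2*(s.card+1)) with hηdef
  have hη : 0 < η := by positivity
  have hev : ∀ᶠ k in Filter.atTop, ∀ i ∈ s,
      (μ.totalVariation (W i)).toReal - η ≤ ((μs k).totalVariation (W i)).toReal := by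
    rw [Filter.eventually_all_finset]
    intro i _
    exact PhiLSC.eventual_tv_lb μs μ hconv (hWo i) hη
  have hcardη : (s.card : ℝ) * η ≤ ε/2 := by
    rw [hηdef, mul_comm, div_mul_eq_mul_div,
      div_le_div_iff₀ (by positivity) (by norm_num : (0:ℝ) < 2)]
    have := Nat.cast_nonneg (α := ℝ) s.card
    nlinarith
  have hev2 : ∀ᶠ k in Filter.atTop, PhiPen φ μ - ε ≤ PhiPen φ (μs k) := by
    filter_upwards [hev] with k hk
    have h1 : ∀ i ∈ s, φ ((μ.totalVariation (W i)).toReal) - η ≤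
        φ (((μs k).totalVariation (W i)).toReal) := fun i hi =>
      PhiLSC.phi_lb hA1 ENNReal.toReal_nonneg ENNReal.toReal_nonneg hη.le (hk i hi)
    have h2 : ∑ i ∈ s, (φ ((μ.totalVariation (W i)).toReal) - η) ≤
        ∑ i ∈ s, φ (((μs k).totalVariation (W i)).toReal) :=
      Finset.sum_le_sum h1
    rw [Finset.sum_sub_distrib, Finset.sum_const, nsmul_eq_mul] at h2
    have h3 : ∑ i ∈ s, φ (((μs k).totalVariation (W i)).toReal) ≤ PhiPen φ (μs k) :=
      PhiLSC.sum_phi_le_phiPen hA1 (μs k) s W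
        (fun i _ => (hWo i).measurableSet) hWdisj
    linarith
  have := Filter.le_liminf_of_le hcobdd hev2
  linarith
end

section
/- Let φ satisfy (A1), α > 0, and suppose f ∈ W(D), i.e. there exists μ ∈ M(Ω) with f(x) = [Nμ](x) for every x ∈ D; let ‖f‖_{W(D)} denote the minimal total variation norm over all such representing measures. If μ̄ is any local minimum of J(μ) = L(μ) + αΦ(μ) in the total variation norm, where L(μ) = (1/2)‖Nμ − y‖²_{L²(D,ν)} for some y ∈ L²(D,ν), then ‖Nμ̄ − f‖²_{L²(D,ν)} ≤ 2α‖f‖_{W(D)} + ‖y − f‖²_{L²(D,ν)}. -/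
open MeasureTheory

/-- The integral neural network `[Nμ](x) = ∫_Ω σ(ω, x) dμ(ω)`. -/
noncomputable def Nnet {α β : Type*} [MeasurableSpace α] (σ : α → β → ℝ)
    (μ : SignedMeasure α) (x : β) : ℝ :=
  sInt μ (fun ω => σ ω x)

/-- The least squares loss `L(μ) = (1/2) ‖Nμ - y‖²_{L²(D,ν)}`. -/
noncomputable def Lloss {α β : Type*} [MeasurableSpace α] [MeasurableSpace β]
    (ν : Measure β) (σ : α → β → ℝ) (y : β → ℝ) (μ : SignedMeasure α) : ℝ :=
  1 / 2 * ∫ x, (Nnet σ μ x - y x) ^ 2 ∂ν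

/-! ### Auxiliary lemmas -/

section SolAux
open Set
open scoped ENNReal NNReal

variable {α : Type*} [MeasurableSpace α]

lemma jd_apply (s : SignedMeasure α) {i : Set α} (hi : MeasurableSet i) :
    s i = (s.toJordanDecomposition.posPart i).toReal -
      (s.toJordanDecomposition.negPart i).toReal := by
  conv_lhs => rw [← s.toSignedMeasure_toJordanDecomposition]
  rw [JordanDecomposition.toSignedMeasure, VectorMeasure.sub_apply,
    Measure.toSignedMeasure_apply_measurable hi, Measure.toSignedMeasure_apply_measurable hi]
  rfl

lemma jordan_add_measure (μ ν : SignedMeasure α) :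
    (μ + ν).toJordanDecomposition.posPart + (μ.toJordanDecomposition.negPart +
        ν.toJordanDecomposition.negPart) =
      (μ + ν).toJordanDecomposition.negPart + (μ.toJordanDecomposition.posPart +
        ν.toJordanDecomposition.posPart) := by
  ext s hs
  simp only [Measure.add_apply]
  have h1 := jd_apply (μ + ν) hs
  have h2 := jd_apply μ hs
  have h3 := jd_apply ν hs
  rw [VectorMeasure.add_apply] at h1
  have : ((μ + ν).toJordanDecomposition.posPart s).toReal +
      ((μ.toJordanDecomposition.negPart s).toReal +
        (ν.toJordanDecomposition.negPart s).toReal) =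
      ((μ + ν).toJordanDecomposition.negPart s).toReal +
      ((μ.toJordanDecomposition.posPart s).toReal +
        (ν.toJordanDecomposition.posPart s).toReal) := by linarith
  have := congrArg ENNReal.ofReal this
  rwa [ENNReal.ofReal_add (by positivity) (by positivity),
    ENNReal.ofReal_add (by positivity) (by positivity),
    ENNReal.ofReal_add (by positivity) (by positivity),
    ENNReal.ofReal_add (by positivity) (by positivity),
    ENNReal.ofReal_toReal (measure_ne_top _ _), ENNReal.ofReal_toReal (measure_ne_top _ _),
    ENNReal.ofReal_toReal (measure_ne_top _ _), ENNReal.ofReal_toReal (measure_ne_top _ _),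
    ENNReal.ofReal_toReal (measure_ne_top _ _), ENNReal.ofReal_toReal (measure_ne_top _ _)]
    at this

lemma sInt_add (μ ν : SignedMeasure α) (g : α → ℝ)
    (hg : ∀ (m : Measure α), IsFiniteMeasure m → Integrable g m) :
    sInt (μ + ν) g = sInt μ g + sInt ν g := by
  have key := congrArg (fun m : Measure α => ∫ x, g x ∂m) (jordan_add_measure μ ν)
  simp only [integral_add_measure (hg _ inferInstance) ((hg _ inferInstance).add_measure
    (hg _ inferInstance)), integral_add_measure (hg _ inferInstance) (hg _ inferInstance)] at key
  simp only [sInt]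
  linarith

lemma sInt_neg (μ : SignedMeasure α) (g : α → ℝ) : sInt (-μ) g = -sInt μ g := by
  simp [sInt, SignedMeasure.toJordanDecomposition_neg]

lemma sInt_smul_nonneg (μ : SignedMeasure α) (g : α → ℝ) {c : ℝ} (hc : 0 ≤ c) :
    sInt (c • μ) g = c * sInt μ g := by
  rw [sInt, SignedMeasure.toJordanDecomposition_smul_real,
    JordanDecomposition.real_smul_posPart_nonneg _ _ hc,
    JordanDecomposition.real_smul_negPart_nonneg _ _ hc]
  have h1 : ∀ m : Measure α, ∫ x, g x ∂(c.toNNReal • m) = c * ∫ x, g x ∂m := by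
    intro m
    rw [show (c.toNNReal • m) = (c.toNNReal : ℝ≥0∞) • m from rfl, integral_smul_measure,
      ENNReal.coe_toReal, Real.coe_toNNReal _ hc, smul_eq_mul]
  rw [h1, h1, sInt]; ring

instance tv_finite (μ : SignedMeasure α) : IsFiniteMeasure μ.totalVariation := by
  rw [SignedMeasure.totalVariation]; infer_instance

lemma tv_smul (μ : SignedMeasure α) {c : ℝ} (hc : 0 ≤ c) :
    (c • μ).totalVariation = c.toNNReal • μ.totalVariation := by
  rw [SignedMeasure.totalVariation, SignedMeasure.toJordanDecomposition_smul_real,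
    JordanDecomposition.real_smul_posPart_nonneg _ _ hc,
    JordanDecomposition.real_smul_negPart_nonneg _ _ hc, SignedMeasure.totalVariation, smul_add]

lemma tvNorm_smul (μ : SignedMeasure α) {c : ℝ} (hc : 0 ≤ c) :
    tvNorm (c • μ) = c * tvNorm μ := by
  rw [tvNorm, tv_smul μ hc, tvNorm, Measure.smul_apply, ENNReal.toReal_smul,
    NNReal.smul_def, smul_eq_mul, Real.coe_toNNReal _ hc]

lemma tv_add_le (μ ν : SignedMeasure α) {s : Set α} (hs : MeasurableSet s) :
    (μ + ν).totalVariation s ≤ μ.totalVariation s + ν.totalVariation s := by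
  obtain ⟨T, hT, hpT, hnTc⟩ := (μ + ν).toJordanDecomposition.mutuallySingular
  set p := (μ + ν).toJordanDecomposition.posPart
  set n := (μ + ν).toJordanDecomposition.negPart
  set p1 := μ.toJordanDecomposition.posPart
  set n1 := μ.toJordanDecomposition.negPart
  set p2 := ν.toJordanDecomposition.posPart
  set n2 := ν.toJordanDecomposition.negPart
  have key := jordan_add_measure μ ν
  have hps : p s ≤ p1 s + p2 s := by
    have h1 : p s = p (s ∩ Tᶜ) := by
      have h0 : p (s ∩ T) = 0 := measure_mono_null Set.inter_subset_right hpT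
      conv_lhs => rw [← Set.inter_union_compl s T]
      rw [measure_union (Set.disjoint_of_subset Set.inter_subset_right Set.inter_subset_right
        disjoint_compl_right) (hs.inter hT.compl), h0, zero_add]
    have h2 : n (s ∩ Tᶜ) = 0 := measure_mono_null Set.inter_subset_right hnTc
    have h3 := congrArg (fun m : Measure α => m (s ∩ Tᶜ)) key
    simp only [Measure.add_apply] at h3
    calc p s = p (s ∩ Tᶜ) := h1
      _ ≤ p (s ∩ Tᶜ) + (n1 (s ∩ Tᶜ) + n2 (s ∩ Tᶜ)) := le_self_add
      _ = n (s ∩ Tᶜ) + (p1 (s ∩ Tᶜ) + p2 (s ∩ Tᶜ)) := h3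
      _ = p1 (s ∩ Tᶜ) + p2 (s ∩ Tᶜ) := by rw [h2, zero_add]
      _ ≤ p1 s + p2 s := add_le_add (measure_mono Set.inter_subset_left)
          (measure_mono Set.inter_subset_left)
  have hns : n s ≤ n1 s + n2 s := by
    have h1 : n s = n (s ∩ T) := by
      have h0 : n (s ∩ Tᶜ) = 0 := measure_mono_null Set.inter_subset_right hnTc
      conv_lhs => rw [← Set.inter_union_compl s T]
      rw [measure_union (Set.disjoint_of_subset Set.inter_subset_right Set.inter_subset_right
        disjoint_compl_right) (hs.inter hT.compl), h0, add_zero]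
    have h2 : p (s ∩ T) = 0 := measure_mono_null Set.inter_subset_right hpT
    have h3 := congrArg (fun m : Measure α => m (s ∩ T)) key
    simp only [Measure.add_apply] at h3
    calc n s = n (s ∩ T) := h1
      _ ≤ n (s ∩ T) + (p1 (s ∩ T) + p2 (s ∩ T)) := le_self_add
      _ = p (s ∩ T) + (n1 (s ∩ T) + n2 (s ∩ T)) := h3.symm
      _ = n1 (s ∩ T) + n2 (s ∩ T) := by rw [h2, zero_add]
      _ ≤ n1 s + n2 s := add_le_add (measure_mono Set.inter_subset_left)
          (measure_mono Set.inter_subset_left)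
  show p s + n s ≤ (p1 + n1) s + (p2 + n2) s
  simp only [Measure.add_apply]
  calc p s + n s ≤ (p1 s + p2 s) + (n1 s + n2 s) := add_le_add hps hns
    _ = (p1 s + n1 s) + (p2 s + n2 s) := by rw [add_add_add_comm]

lemma countable_atoms [MeasurableSingletonClass α] (m : Measure α) [IsFiniteMeasure m] :
    Set.Countable {ω | m {ω} ≠ 0} := by
  have : {ω | m {ω} ≠ 0} = {ω | 0 < m ({ω} : Set α)} := by
    ext ω; simp [pos_iff_ne_zero]
  rw [this]
  exact Measure.countable_meas_pos_of_disjoint_iUnion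
    (fun ω => measurableSet_singleton ω) (fun a b hab => by simp [Set.disjoint_singleton, hab])

lemma measure_countable_null (m : Measure α) {s : Set α} (hs : s.Countable)
    (h : ∀ x ∈ s, m {x} = 0) : m s = 0 := by
  have : s = ⋃ x ∈ s, {x} := (Set.biUnion_of_singleton s).symm
  rw [this]
  haveI := hs.to_subtype
  rw [Set.biUnion_eq_iUnion]
  exact measure_iUnion_null fun x => h x x.2

lemma measure_eq_tsum [MeasurableSingletonClass α] (m : Measure α) {s : Set α}
    (hs : s.Countable) : m s = ∑' x : s, m {(x : α)} := by
  conv_lhs => rw [← Set.biUnion_of_singleton s]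
  exact measure_biUnion hs (fun a _ b _ hab => by simp [Set.disjoint_singleton, hab])
    (fun b _ => measurableSet_singleton b)

lemma summable_toReal_singleton [MeasurableSingletonClass α] (m : Measure α) [IsFiniteMeasure m]
    {s : Set α} (hs : s.Countable) : Summable (fun x : s => (m {(x : α)}).toReal) :=
  ENNReal.summable_toReal (by rw [← measure_eq_tsum m hs]; exact measure_ne_top m s)

lemma tsum_toReal_singleton [MeasurableSingletonClass α] (m : Measure α) [IsFiniteMeasure m]
    {s : Set α} (hs : s.Countable) : ∑' x : s, (m {(x : α)}).toReal = (m s).toReal := by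
  rw [measure_eq_tsum m hs, ENNReal.tsum_toReal_eq (fun x => measure_ne_top m _)]

variable {φ φD : ℝ → ℝ} {γ : ℝ}

lemma A1.superhomog (h : A1 φ φD γ) {c z : ℝ} (hc0 : 0 ≤ c) (hc1 : c ≤ 1) (hz : 0 ≤ z) :
    c * φ z ≤ φ (c * z) := by
  obtain ⟨-, hcc⟩ := h.concave
  have := hcc (Set.self_mem_Ici) hz (by linarith : (0:ℝ) ≤ 1 - c) hc0
    (by ring : (1 - c) + c = 1)
  simpa [h.map_zero] using this

lemma A1.le_self (h : A1 φ φD γ) {z : ℝ} (hz : 0 ≤ z) : φ z ≤ z := by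
  rcases eq_or_lt_of_le hz with hz0 | hz0
  · simp [← hz0, h.map_zero]
  by_contra hgt
  push_neg at hgt
  have hd := (h.hasDeriv 0 le_rfl)
  rw [hasDerivWithinAt_iff_tendsto_slope] at hd
  have hmem : Set.Ici (0:ℝ) \ {0} = Set.Ioi (0:ℝ) := by
    ext x; simp [Set.mem_diff, lt_iff_le_and_ne, eq_comm, and_comm]
  rw [hmem] at hd
  have hslope : ∀ᶠ s in nhdsWithin 0 (Set.Ioi (0:ℝ)), φ z / z ≤ slope φ 0 s := by
    filter_upwards [Ioc_mem_nhdsGT_of_mem (by exact ⟨le_rfl, hz0⟩ : (0:ℝ) ∈ Set.Ico 0 z)]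
      with s hs
    have hs0 : 0 < s := hs.1
    have hsz : s ≤ z := hs.2
    have := h.superhomog (c := s / z) (div_nonneg hs0.le hz) (by
      rw [div_le_one hz0]; exact hsz) hz
    have hsl : slope φ 0 s = φ s / s := by
      rw [slope_def_field, h.map_zero, sub_zero, sub_zero]
    rw [div_mul_cancel₀ _ hz0.ne'] at this
    rw [hsl, div_le_div_iff₀ hz0 hs0]
    have h4 := mul_le_mul_of_nonneg_right this hz0.le
    have h5 : s / z * φ z * z = φ z * s := by
      field_simp
    linarith
  have := ge_of_tendsto hd hslope
  rw [h.deriv_zero] at this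
  rw [div_le_one hz0] at this
  linarith

lemma A1.subadd (h : A1 φ φD γ) {a b : ℝ} (ha : 0 ≤ a) (hb : 0 ≤ b) :
    φ (a + b) ≤ φ a + φ b := by
  rcases eq_or_lt_of_le (by linarith : (0:ℝ) ≤ a + b) with h0 | h0
  · have ha0 : a = 0 := by linarith
    have hb0 : b = 0 := by linarith
    simp [ha0, hb0, h.map_zero]
  have h1 : a / (a + b) * φ (a + b) ≤ φ a := by
    have := h.superhomog (c := a / (a + b)) (div_nonneg ha h0.le)
      (by rw [div_le_one h0]; linarith) h0.le
    rwa [div_mul_cancel₀ _ h0.ne'] at this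
  have h2 : b / (a + b) * φ (a + b) ≤ φ b := by
    have := h.superhomog (c := b / (a + b)) (div_nonneg hb h0.le)
      (by rw [div_le_one h0]; linarith) h0.le
    rwa [div_mul_cancel₀ _ h0.ne'] at this
  have hsum : a / (a + b) + b / (a + b) = 1 := by field_simp
  have h3 : a / (a + b) * φ (a + b) + b / (a + b) * φ (a + b) = φ (a + b) := by
    rw [← add_mul, hsum, one_mul]
  linarith

lemma A1.add_le (h : A1 φ φD γ) {a b : ℝ} (ha : 0 ≤ a) (hb : 0 ≤ b) :
    φ (a + b) ≤ φ a + b :=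
  le_trans (h.subadd ha hb) (by linarith [h.le_self hb])

lemma int_mul {β : Type*} [MeasurableSpace β] {ν : Measure β} {u v : β → ℝ}
    (hu : MemLp u 2 ν) (hv : MemLp v 2 ν) : Integrable (fun x => u x * v x) ν := by
  have h1 := hu.integrable_sq
  have h2 := hv.integrable_sq
  refine ((h1.add h2).const_mul (1/2 : ℝ)).mono'
    (hu.aestronglyMeasurable.mul hv.aestronglyMeasurable) (ae_of_all _ fun x => ?_)
  simp only [Real.norm_eq_abs, Pi.add_apply]
  have := abs_mul (u x) (v x)
  nlinarith [sq_nonneg (|u x| - |v x|), sq_abs (u x), sq_abs (v x), abs_nonneg (u x),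
    abs_nonneg (v x)]

lemma phiPen_bound [MeasurableSingletonClass α] (h : A1 φ φD γ)
    (μb μf : SignedMeasure α) {t : ℝ} (ht0 : 0 ≤ t) (ht1 : t ≤ 1) :
    PhiPen φ (μb + t • (μf - μb)) ≤ PhiPen φ μb + t * tvNorm μf := by
  set μt := μb + t • (μf - μb) with hμt
  have hcomb : μt = (1 - t) • μb + t • μf := by
    rw [hμt]; ext i hi
    simp only [VectorMeasure.add_apply, VectorMeasure.smul_apply, VectorMeasure.sub_apply,
      smul_eq_mul]
    ring
  set m := μt.totalVariation with hm
  set m1 := μb.totalVariation with hm1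
  set m2 := μf.totalVariation with hm2
  have key : ∀ s : Set α, MeasurableSet s →
      (m s).toReal ≤ (1 - t) * (m1 s).toReal + t * (m2 s).toReal := by
    intro s hs
    have h1 : m s ≤ ((1 - t) • μb).totalVariation s + (t • μf).totalVariation s := by
      rw [hm, hcomb]; exact tv_add_le _ _ hs
    rw [tv_smul μb (by linarith : (0:ℝ) ≤ 1 - t), tv_smul μf ht0] at h1
    have hnt1 : ((1 - t).toNNReal • μb.totalVariation) s ≠ ⊤ := by
      simp only [Measure.smul_apply, smul_eq_mul]
      exact ENNReal.mul_ne_top ENNReal.coe_ne_top (measure_ne_top _ _)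
    have hnt2 : (t.toNNReal • μf.totalVariation) s ≠ ⊤ := by
      simp only [Measure.smul_apply, smul_eq_mul]
      exact ENNReal.mul_ne_top ENNReal.coe_ne_top (measure_ne_top _ _)
    have h2 := ENNReal.toReal_mono (ENNReal.add_ne_top.2 ⟨hnt1, hnt2⟩) h1
    rw [ENNReal.toReal_add hnt1 hnt2] at h2
    simpa [Measure.smul_apply, ENNReal.toReal_smul, NNReal.smul_def,
      Real.coe_toNNReal _ (by linarith : (0:ℝ) ≤ 1 - t), Real.coe_toNNReal _ ht0] using h2
  set A := atomsOf μt with hA0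
  set B := atomsOf μb with hB0
  have hA : A.Countable := countable_atoms m
  have hB : B.Countable := countable_atoms m1
  have hAm : MeasurableSet A := hA.measurableSet
  have hAcB : m (Aᶜ ∩ B) = 0 := by
    refine measure_countable_null m (hB.mono inter_subset_right) (fun x hx => ?_)
    have := hx.1
    simpa [hA0, atomsOf, hm] using this
  have hdiff : (m Aᶜ).toReal ≤ (m1 Bᶜ).toReal + t * (m2 (Aᶜ ∩ Bᶜ)).toReal := by
    have hsplit : m Aᶜ ≤ m (Aᶜ ∩ Bᶜ) := by
      calc m Aᶜ = m ((Aᶜ ∩ B) ∪ (Aᶜ ∩ Bᶜ)) := by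
            rw [← Set.inter_union_distrib_left, Set.union_compl_self, Set.inter_univ]
        _ ≤ m (Aᶜ ∩ B) + m (Aᶜ ∩ Bᶜ) := measure_union_le _ _
        _ = m (Aᶜ ∩ Bᶜ) := by rw [hAcB, zero_add]
    have h3 := key (Aᶜ ∩ Bᶜ) (hAm.compl.inter hB.measurableSet.compl)
    have h4 : (m Aᶜ).toReal ≤ (m (Aᶜ ∩ Bᶜ)).toReal :=
      ENNReal.toReal_mono (measure_ne_top _ _) hsplit
    have h5 : (m1 (Aᶜ ∩ Bᶜ)).toReal ≤ (m1 Bᶜ).toReal :=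
      ENNReal.toReal_mono (measure_ne_top _ _) (measure_mono inter_subset_right)
    nlinarith [ENNReal.toReal_nonneg (a := m1 (Aᶜ ∩ Bᶜ)), ENNReal.toReal_nonneg (a := m2 (Aᶜ ∩ Bᶜ))]
  have hpt : ∀ ω : α, φ ((m {ω}).toReal) ≤
      φ ((m1 {ω}).toReal) + t * (m2 {ω}).toReal := by
    intro ω
    have hk := key {ω} (measurableSet_singleton ω)
    have ha : (0:ℝ) ≤ (m1 {ω}).toReal := ENNReal.toReal_nonneg
    have hb : (0:ℝ) ≤ t * (m2 {ω}).toReal := by positivity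
    calc φ ((m {ω}).toReal) ≤ φ ((m1 {ω}).toReal + t * (m2 {ω}).toReal) := by
          refine h.mono (Set.mem_Ici.2 ENNReal.toReal_nonneg) (Set.mem_Ici.2 (by linarith)) ?_
          nlinarith [ENNReal.toReal_nonneg (a := m {ω})]
      _ ≤ φ ((m1 {ω}).toReal) + t * (m2 {ω}).toReal := h.add_le ha hb
  have hsumGA : Summable (fun ω : A => φ ((m1 {(ω:α)}).toReal)) := by
    refine Summable.of_nonneg_of_le (fun ω => h.nonneg _ ENNReal.toReal_nonneg)
      (fun ω => h.le_self ENNReal.toReal_nonneg) (summable_toReal_singleton m1 hA)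
  have hsumGB : Summable (fun ω : B => φ ((m1 {(ω:α)}).toReal)) := by
    refine Summable.of_nonneg_of_le (fun ω => h.nonneg _ ENNReal.toReal_nonneg)
      (fun ω => h.le_self ENNReal.toReal_nonneg) (summable_toReal_singleton m1 hB)
  have hsumHA : Summable (fun ω : A => t * (m2 {(ω:α)}).toReal) :=
    (summable_toReal_singleton m2 hA).mul_left t
  have hstep1 : ∑' ω : A, φ ((m {(ω:α)}).toReal) ≤
      ∑' ω : A, (φ ((m1 {(ω:α)}).toReal) + t * (m2 {(ω:α)}).toReal) := by
    refine Summable.tsum_le_tsum (fun ω => hpt ω) ?_ (hsumGA.add hsumHA)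
    exact Summable.of_nonneg_of_le (fun ω => h.nonneg _ ENNReal.toReal_nonneg)
      (fun ω => hpt ω) (hsumGA.add hsumHA)
  have hstep2 : ∑' ω : A, (φ ((m1 {(ω:α)}).toReal) + t * (m2 {(ω:α)}).toReal) =
      (∑' ω : A, φ ((m1 {(ω:α)}).toReal)) + t * (m2 A).toReal := by
    rw [Summable.tsum_add hsumGA hsumHA, tsum_mul_left, tsum_toReal_singleton m2 hA]
  have hstep3 : ∑' ω : A, φ ((m1 {(ω:α)}).toReal) ≤ ∑' ω : B, φ ((m1 {(ω:α)}).toReal) := by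
    rw [tsum_subtype A (fun ω => φ ((m1 {ω}).toReal)),
      tsum_subtype B (fun ω => φ ((m1 {ω}).toReal))]
    refine Summable.tsum_le_tsum (fun x => ?_) (summable_subtype_iff_indicator.1 hsumGA)
      (summable_subtype_iff_indicator.1 hsumGB)
    by_cases hxA : x ∈ A
    · by_cases hxB : x ∈ B
      · rw [Set.indicator_of_mem hxA, Set.indicator_of_mem hxB]
      · rw [Set.indicator_of_mem hxA, Set.indicator_of_notMem hxB]
        have hx0 : m1 {x} = 0 := by
          by_contra hc
          exact hxB hc
        rw [hx0]
        simp [h.map_zero]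
    · rw [Set.indicator_of_notMem hxA]
      by_cases hxB : x ∈ B
      · rw [Set.indicator_of_mem hxB]
        exact h.nonneg _ ENNReal.toReal_nonneg
      · rw [Set.indicator_of_notMem hxB]
  have hmass : (m2 (Aᶜ ∩ Bᶜ)).toReal + (m2 A).toReal ≤ tvNorm μf := by
    have hdisj : Disjoint (Aᶜ ∩ Bᶜ) A :=
      Set.disjoint_of_subset_left inter_subset_left disjoint_compl_left
    have hu : m2 ((Aᶜ ∩ Bᶜ) ∪ A) = m2 (Aᶜ ∩ Bᶜ) + m2 A := measure_union hdisj hAm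
    have hle : m2 (Aᶜ ∩ Bᶜ) + m2 A ≤ m2 univ := hu ▸ measure_mono (subset_univ _)
    have := ENNReal.toReal_mono (measure_ne_top m2 univ) hle
    rwa [ENNReal.toReal_add (measure_ne_top _ _) (measure_ne_top _ _)] at this
  have hPhit : PhiPen φ μt = (m Aᶜ).toReal + ∑' ω : A, φ ((m {(ω:α)}).toReal) := rfl
  have hPhib : PhiPen φ μb = (m1 Bᶜ).toReal + ∑' ω : B, φ ((m1 {(ω:α)}).toReal) := rfl
  rw [hPhit, hPhib]
  nlinarith [hdiff, hstep1, hstep2, hstep3, hmass, ht0]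

lemma le_of_forall_pos_le_add' {a b : ℝ} (h : ∀ δ : ℝ, 0 < δ → a ≤ b + δ) : a ≤ b := by
  by_contra hc
  push_neg at hc
  have := h ((a - b)/2) (by linarith)
  linarith

end SolAux

section MainAux
open scoped ENNReal NNReal

variable {d : ℕ} {Ω : Set (EuclideanSpace ℝ (Fin (d + 1)))} {D : Set (EuclideanSpace ℝ (Fin d))}

lemma slice_integrable (σ : ↥Ω → ↥D → ℝ)
    (hσcont : Continuous fun p : ↥Ω × ↥D => σ p.1 p.2) (hΩ : IsCompact Ω) (x : ↥D)
    (m : Measure ↥Ω) (hm : IsFiniteMeasure m) : Integrable (fun ω => σ ω x) m := by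
  haveI : CompactSpace ↥Ω := isCompact_iff_compactSpace.mp hΩ
  have hc : Continuous fun ω : ↥Ω => σ ω x :=
    hσcont.comp (continuous_id.prodMk continuous_const)
  obtain ⟨C, hC⟩ := isCompact_univ.exists_bound_of_continuousOn hc.continuousOn
  exact ⟨hc.aestronglyMeasurable, HasFiniteIntegral.of_bounded (C := C)
    (ae_of_all _ fun ω => hC ω trivial)⟩

lemma memLp_Nnet [Nonempty ↥Ω] (hΩ : IsCompact Ω) (ν : Measure ↥D) [IsProbabilityMeasure ν]
    (hmom : Integrable (fun x : ↥D => ‖(x : EuclideanSpace ℝ (Fin d))‖ ^ 2) ν)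
    (σ : ↥Ω → ↥D → ℝ) (hσcont : Continuous fun p : ↥Ω × ↥D => σ p.1 p.2)
    {Λ : ℝ} (hΛ : 0 ≤ Λ)
    (hLip : ∀ (ω₁ ω₂ : ↥Ω) (x : ↥D), |σ ω₁ x - σ ω₂ x| ≤
      Λ * ‖(x : EuclideanSpace ℝ (Fin d))‖ *
        ‖(ω₁ : EuclideanSpace ℝ (Fin (d + 1))) - (ω₂ : EuclideanSpace ℝ (Fin (d + 1)))‖)
    (hbdd : ∃ C : ℝ, ∀ ω : ↥Ω, eLpNorm (σ ω) 2 ν ≤ ENNReal.ofReal C)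
    (μ : SignedMeasure ↥Ω) : MemLp (Nnet σ μ) 2 ν := by
  obtain ⟨C, hC⟩ := hbdd
  set ω₀ : ↥Ω := Classical.arbitrary ↥Ω with hω₀
  obtain ⟨r, hr⟩ := hΩ.isBounded.subset_closedBall (ω₀ : EuclideanSpace ℝ (Fin (d+1)))
  have hr0 : 0 ≤ r := by
    have := hr ω₀.2
    simpa using this
  set p := μ.toJordanDecomposition.posPart with hp
  set n := μ.toJordanDecomposition.negPart with hn
  have hσm : StronglyMeasurable (fun q : ↥D × ↥Ω => σ q.2 q.1) :=
    (hσcont.comp (continuous_snd.prodMk continuous_fst)).stronglyMeasurable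
  have hsm : StronglyMeasurable (Nnet σ μ) := by
    have h1 : StronglyMeasurable (fun x : ↥D => ∫ ω, σ ω x ∂p) := hσm.integral_prod_right'
    have h2 : StronglyMeasurable (fun x : ↥D => ∫ ω, σ ω x ∂n) := hσm.integral_prod_right'
    exact h1.sub h2
  set K : ℝ := (p Set.univ).toReal + (n Set.univ).toReal with hK
  set Cf : ↥D → ℝ := fun x => ‖σ ω₀ x‖ + Λ * r * ‖(x : EuclideanSpace ℝ (Fin d))‖ with hCf
  have hσb : ∀ (ω : ↥Ω) (x : ↥D), ‖σ ω x‖ ≤ Cf x := by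
    intro ω x
    have h1 := hLip ω ω₀ x
    have h2 : ‖(ω : EuclideanSpace ℝ (Fin (d+1))) - (ω₀ : EuclideanSpace ℝ (Fin (d+1)))‖ ≤ r := by
      rw [← dist_eq_norm]
      exact Metric.mem_closedBall.1 (hr ω.2)
    have h3 : |σ ω x| ≤ |σ ω₀ x| + |σ ω x - σ ω₀ x| := by
      have := abs_add_le (σ ω₀ x) (σ ω x - σ ω₀ x)
      simpa using this
    have h4 : Λ * ‖(x : EuclideanSpace ℝ (Fin d))‖ *
        ‖(ω : EuclideanSpace ℝ (Fin (d+1))) - (ω₀ : EuclideanSpace ℝ (Fin (d+1)))‖ ≤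
        Λ * r * ‖(x : EuclideanSpace ℝ (Fin d))‖ := by
      have h5 := mul_le_mul_of_nonneg_left h2
        (mul_nonneg hΛ (norm_nonneg ((x : EuclideanSpace ℝ (Fin d)))))
      calc Λ * ‖(x : EuclideanSpace ℝ (Fin d))‖ *
          ‖(ω : EuclideanSpace ℝ (Fin (d+1))) - (ω₀ : EuclideanSpace ℝ (Fin (d+1)))‖
          = Λ * ‖(x : EuclideanSpace ℝ (Fin d))‖ *
            ‖(ω : EuclideanSpace ℝ (Fin (d+1))) - (ω₀ : EuclideanSpace ℝ (Fin (d+1)))‖ := rfl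
        _ ≤ Λ * ‖(x : EuclideanSpace ℝ (Fin d))‖ * r := h5
        _ = Λ * r * ‖(x : EuclideanSpace ℝ (Fin d))‖ := by ring
    simp only [hCf, Real.norm_eq_abs]
    linarith
  have hCf0 : ∀ x, 0 ≤ Cf x := fun x => le_trans (norm_nonneg _) (hσb ω₀ x)
  have hNb : ∀ x, ‖Nnet σ μ x‖ ≤ K * Cf x := by
    intro x
    have h1 : ‖∫ ω, σ ω x ∂p‖ ≤ Cf x * (p Set.univ).toReal :=
      norm_integral_le_of_norm_le_const (ae_of_all _ fun ω => hσb ω x)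
    have h2 : ‖∫ ω, σ ω x ∂n‖ ≤ Cf x * (n Set.univ).toReal :=
      norm_integral_le_of_norm_le_const (ae_of_all _ fun ω => hσb ω x)
    calc ‖Nnet σ μ x‖ ≤ ‖∫ ω, σ ω x ∂p‖ + ‖∫ ω, σ ω x ∂n‖ := norm_sub_le _ _
      _ ≤ K * Cf x := by
          have h6 : Cf x * (p Set.univ).toReal + Cf x * (n Set.univ).toReal = K * Cf x := by
            rw [hK]; ring
          linarith
  have hσ0 : MemLp (σ ω₀) 2 ν :=
    ⟨(hσcont.comp (continuous_const.prodMk continuous_id)).aestronglyMeasurable,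
      lt_of_le_of_lt (hC ω₀) ENNReal.ofReal_lt_top⟩
  have hnorm : MemLp (fun x : ↥D => ‖(x : EuclideanSpace ℝ (Fin d))‖) 2 ν :=
    (memLp_two_iff_integrable_sq
      (continuous_subtype_val.norm.aestronglyMeasurable)).2 hmom
  have hCf2 : MemLp Cf 2 ν := hσ0.norm.add (hnorm.const_mul (Λ * r))
  have hCfK : MemLp (fun x => K * Cf x) 2 ν := hCf2.const_mul K
  refine hCfK.of_le hsm.aestronglyMeasurable (ae_of_all _ fun x => ?_)
  calc ‖Nnet σ μ x‖ ≤ K * Cf x := hNb x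
    _ ≤ ‖K * Cf x‖ := le_abs_self _

end MainAux

/-- Approximation guarantee for local minima. Let `φ` satisfy (A1),
`α > 0`, and suppose `f ∈ W(D)`, i.e. `f = Nμ` pointwise on `D` for some `μ ∈ M(Ω)`;
`‖f‖_{W(D)}` is the infimal total variation norm over representing measures. If `μ̄` is
any local minimum (in the total variation norm) of `J(μ) = L(μ) + α Φ(μ)` with
`L(μ) = (1/2)‖Nμ - y‖²_{L²(D,ν)}`, then
`‖Nμ̄ - f‖²_{L²(D,ν)} ≤ 2 α ‖f‖_{W(D)} + ‖y - f‖²_{L²(D,ν)}`. -/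
theorem local_min_fidelity_estimate (d : ℕ)
    (Ω : Set (EuclideanSpace ℝ (Fin (d + 1)))) (hΩ : IsCompact Ω)
    (D : Set (EuclideanSpace ℝ (Fin d)))
    (ν : Measure ↥D) [IsProbabilityMeasure ν]
    (hmom : Integrable (fun x : ↥D => ‖(x : EuclideanSpace ℝ (Fin d))‖ ^ 2) ν)
    (σ : ↥Ω → ↥D → ℝ)
    (hσcont : Continuous fun p : ↥Ω × ↥D => σ p.1 p.2)
    (Λ : ℝ) (hΛ : 0 < Λ)
    (hLip : ∀ (ω₁ ω₂ : ↥Ω) (x : ↥D),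
      |σ ω₁ x - σ ω₂ x| ≤ Λ * ‖(x : EuclideanSpace ℝ (Fin d))‖ *
        ‖(ω₁ : EuclideanSpace ℝ (Fin (d + 1))) - (ω₂ : EuclideanSpace ℝ (Fin (d + 1)))‖)
    (hbdd : ∃ C : ℝ, ∀ ω : ↥Ω, eLpNorm (σ ω) 2 ν ≤ ENNReal.ofReal C)
    (y : ↥D → ℝ) (hy : MemLp y 2 ν)
    (φ φD : ℝ → ℝ) (γ : ℝ) (hA1 : A1 φ φD γ)
    (α : ℝ) (hα : 0 < α)
    (f : ↥D → ℝ)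
    (hrep : ∃ μf : SignedMeasure ↥Ω, ∀ x : ↥D, Nnet σ μf x = f x)
    (μbar : SignedMeasure ↥Ω)
    (hloc : ∃ ε > 0, ∀ μ : SignedMeasure ↥Ω, tvNorm (μ - μbar) ≤ ε →
      Lloss ν σ y μbar + α * PhiPen φ μbar ≤ Lloss ν σ y μ + α * PhiPen φ μ) :
    ∫ x, (Nnet σ μbar x - f x) ^ 2 ∂ν ≤
      2 * α * sInf (tvNorm '' {μf : SignedMeasure ↥Ω | ∀ x : ↥D, Nnet σ μf x = f x}) +
        ∫ x, (y x - f x) ^ 2 ∂ν := by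
  classical
  set S := tvNorm '' {μf : SignedMeasure ↥Ω | ∀ x : ↥D, Nnet σ μf x = f x} with hS
  obtain ⟨μf0, hμf0⟩ := hrep
  have hSne : S.Nonempty := ⟨tvNorm μf0, μf0, hμf0, rfl⟩
  have hSlb : ∀ b ∈ S, (0:ℝ) ≤ b := by
    rintro b ⟨μ', -, rfl⟩
    exact ENNReal.toReal_nonneg
  have hInt_yf : (0:ℝ) ≤ ∫ x, (y x - f x) ^ 2 ∂ν := integral_nonneg fun x => sq_nonneg _
  rcases isEmpty_or_nonempty ↥Ω with hE | hNE
  · -- degenerate case : Ω is empty, all networks are zero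
    have hzero : ∀ (μ : SignedMeasure ↥Ω) (x : ↥D), Nnet σ μ x = 0 := by
      intro μ x
      simp [Nnet, sInt, integral_of_isEmpty]
    have hf0 : ∀ x, f x = 0 := fun x => (hμf0 x).symm.trans (hzero μf0 x)
    have hL : ∫ x, (Nnet σ μbar x - f x) ^ 2 ∂ν = 0 := by
      have : (fun x : ↥D => (Nnet σ μbar x - f x) ^ 2) = fun _ => 0 := by
        funext x; rw [hzero μbar x, hf0 x]; ring
      rw [this, integral_zero]
    rw [hL]
    have h1 : 0 ≤ sInf S := le_csInf hSne hSlb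
    nlinarith [hα]
  haveI := hNE
  have hslice : ∀ (x : ↥D) (m : Measure ↥Ω), IsFiniteMeasure m →
      Integrable (fun ω => σ ω x) m := fun x m hm => slice_integrable σ hσcont hΩ x m hm
  have hmemN : ∀ μ : SignedMeasure ↥Ω, MemLp (Nnet σ μ) 2 ν :=
    fun μ => memLp_Nnet hΩ ν hmom σ hσcont hΛ.le hLip hbdd μ
  have hNlin : ∀ (μ1 μ2 : SignedMeasure ↥Ω) (c : ℝ), 0 ≤ c → ∀ x : ↥D,
      Nnet σ (μ1 + c • (μ2 - μ1)) x = Nnet σ μ1 x + c * (Nnet σ μ2 x - Nnet σ μ1 x) := by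
    intro μ1 μ2 c hc x
    have hint : ∀ (m : Measure ↥Ω), IsFiniteMeasure m →
        Integrable (fun ω => σ ω x) m := hslice x
    show sInt (μ1 + c • (μ2 - μ1)) (fun ω => σ ω x) = _
    rw [sInt_add _ _ _ hint, sInt_smul_nonneg _ _ hc, sub_eq_add_neg,
      sInt_add _ _ _ hint, sInt_neg]
    show _ = sInt μ1 (fun ω => σ ω x) + c * (sInt μ2 (fun ω => σ ω x) -
      sInt μ1 (fun ω => σ ω x))
    ring
  set g := Nnet σ μbar with hgdef
  have hg2 : MemLp g 2 ν := hmemN μbar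
  have hffun : f = Nnet σ μf0 := funext fun x => (hμf0 x).symm
  have hf2 : MemLp f 2 ν := hffun ▸ hmemN μf0
  set u := fun x : ↥D => g x - y x with hudef
  set v := fun x : ↥D => f x - g x with hvdef
  have hu2 : MemLp u 2 ν := hg2.sub hy
  have hv2 : MemLp v 2 ν := hf2.sub hg2
  have hIuu : Integrable (fun x => u x * u x) ν := int_mul hu2 hu2
  have hIuv : Integrable (fun x => u x * v x) ν := int_mul hu2 hv2
  have hIvv : Integrable (fun x => v x * v x) ν := int_mul hv2 hv2
  have hfy2 : MemLp (fun x : ↥D => f x - y x) 2 ν := hf2.sub hy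
  have hIv_fy : Integrable (fun x => v x * (f x - y x)) ν := int_mul hv2 hfy2
  have hIfy : Integrable (fun x => (f x - y x) * (f x - y x)) ν := int_mul hfy2 hfy2
  have hvv0 : (0:ℝ) ≤ ∫ x, v x * v x ∂ν := integral_nonneg fun x => mul_self_nonneg _
  obtain ⟨ε, hε0, hlocal⟩ := hloc
  have main : ∀ μf' : SignedMeasure ↥Ω, (∀ x : ↥D, Nnet σ μf' x = f x) →
      - ∫ x, u x * v x ∂ν ≤ α * tvNorm μf' := by
    intro μf' hf'
    refine le_of_forall_pos_le_add' fun δ hδ => ?_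
    set T0 := tvNorm (μf' - μbar) with hT0
    have hT00 : (0:ℝ) ≤ T0 := ENNReal.toReal_nonneg
    set t := min (min 1 (ε / (T0 + 1))) (2 * δ / (∫ x, v x * v x ∂ν + 1)) with htdef
    have ht0 : 0 < t := lt_min (lt_min one_pos (by positivity)) (by positivity)
    have ht1 : t ≤ 1 := le_trans (min_le_left _ _) (min_le_left _ _)
    have htε : t * T0 ≤ ε := by
      have h1 : t ≤ ε / (T0 + 1) := le_trans (min_le_left _ _) (min_le_right _ _)
      have h2 : t * T0 ≤ (ε / (T0 + 1)) * T0 := mul_le_mul_of_nonneg_right h1 hT00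
      have h3 : (ε / (T0 + 1)) * T0 ≤ ε := by
        rw [div_mul_eq_mul_div, div_le_iff₀ (by linarith)]
        nlinarith
      linarith
    have htδ : t / 2 * ∫ x, v x * v x ∂ν ≤ δ := by
      have h1 : t ≤ 2 * δ / (∫ x, v x * v x ∂ν + 1) := min_le_right _ _
      have h2 : t * (∫ x, v x * v x ∂ν) ≤
          (2 * δ / (∫ x, v x * v x ∂ν + 1)) * (∫ x, v x * v x ∂ν) :=
        mul_le_mul_of_nonneg_right h1 hvv0
      have h3 : (2 * δ / (∫ x, v x * v x ∂ν + 1)) * (∫ x, v x * v x ∂ν) ≤ 2 * δ := by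
        rw [div_mul_eq_mul_div, div_le_iff₀ (by linarith)]
        nlinarith
      linarith
    set μt := μbar + t • (μf' - μbar) with hμtdef
    have hdist : tvNorm (μt - μbar) ≤ ε := by
      have heq : μt - μbar = t • (μf' - μbar) := by
        rw [hμtdef]; exact add_sub_cancel_left _ _
      rw [heq, tvNorm_smul _ ht0.le]
      exact htε
    have hJ := hlocal μt hdist
    have hΦ := phiPen_bound hA1 μbar μf' ht0.le ht1
    have hNt : ∀ x : ↥D, Nnet σ μt x - y x = u x + t * v x := by
      intro x
      rw [hμtdef, hNlin μbar μf' t ht0.le x, hf' x]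
      simp only [hudef, hvdef, hgdef]
      ring
    have hLt : Lloss ν σ y μt = 1/2 * (∫ x, u x * u x ∂ν + ((2 * t) * ∫ x, u x * v x ∂ν
        + t^2 * ∫ x, v x * v x ∂ν)) := by
      have hptw : (fun x : ↥D => (Nnet σ μt x - y x)^2) =
          fun x => u x * u x + ((2*t) * (u x * v x) + t^2 * (v x * v x)) := by
        funext x; rw [show Nnet σ μt x - y x = u x + t * v x from hNt x]; ring
      have hI2 : Integrable (fun x : ↥D => (2*t) * (u x * v x) + t^2 * (v x * v x)) ν := by
        exact (hIuv.const_mul _).add (hIvv.const_mul _)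
      rw [Lloss, hptw, integral_add hIuu hI2,
        integral_add ((hIuv.const_mul (2*t)) : Integrable (fun x : ↥D => (2*t) * (u x * v x)) ν)
          ((hIvv.const_mul (t^2)) : Integrable (fun x : ↥D => t^2 * (v x * v x)) ν),
        integral_const_mul, integral_const_mul]
    have hLb : Lloss ν σ y μbar = 1/2 * ∫ x, u x * u x ∂ν := by
      have hptw : (fun x : ↥D => (Nnet σ μbar x - y x)^2) = fun x => u x * u x := by
        funext x; simp only [hudef, hgdef]; ring
      rw [Lloss, hptw]
    rw [hLt, hLb] at hJ
    have hkey : 0 ≤ t * (∫ x, u x * v x ∂ν + t/2 * ∫ x, v x * v x ∂ν + α * tvNorm μf') := by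
      nlinarith [hJ, hΦ, hα]
    have hpos : 0 ≤ ∫ x, u x * v x ∂ν + t/2 * ∫ x, v x * v x ∂ν + α * tvNorm μf' :=
      le_of_mul_le_mul_left (by simpa using hkey) ht0
    linarith [htδ]
  have hbound : (∫ x, (Nnet σ μbar x - f x)^2 ∂ν - ∫ x, (y x - f x)^2 ∂ν) / (2*α) ≤ sInf S := by
    refine le_csInf hSne ?_
    rintro b ⟨μ', hμ', rfl⟩
    have h1 := main μ' hμ'
    have h2 : ∫ x, v x * v x ∂ν = ∫ x, v x * (f x - y x) ∂ν - ∫ x, u x * v x ∂ν := by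
      rw [← integral_sub hIv_fy hIuv]
      congr 1
      funext x
      simp only [hudef, hvdef, hgdef]
      ring
    have h3a : ∀ x : ↥D, v x * (f x - y x) ≤
        1/2 * (v x * v x) + 1/2 * ((f x - y x) * (f x - y x)) := by
      intro x
      simp only [hvdef]
      nlinarith [sq_nonneg (f x - g x - (f x - y x))]
    have hI3 : Integrable (fun x : ↥D => 1/2 * (v x * v x) +
        1/2 * ((f x - y x) * (f x - y x))) ν := by
      exact (hIvv.const_mul _).add (hIfy.const_mul _)
    have h3 := integral_mono hIv_fy hI3 h3a
    rw [integral_add ((hIvv.const_mul (1/2 : ℝ)) :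
          Integrable (fun x : ↥D => 1/2 * (v x * v x)) ν)
        ((hIfy.const_mul (1/2 : ℝ)) :
          Integrable (fun x : ↥D => 1/2 * ((f x - y x) * (f x - y x))) ν),
      integral_const_mul, integral_const_mul] at h3
    have h4 : ∫ x, (Nnet σ μbar x - f x)^2 ∂ν = ∫ x, v x * v x ∂ν := by
      congr 1
      funext x
      simp only [hvdef, hgdef]
      ring
    have h5 : ∫ x, (y x - f x)^2 ∂ν = ∫ x, (f x - y x) * (f x - y x) ∂ν := by
      congr 1
      funext x
      ring
    rw [div_le_iff₀ (by positivity)]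
    nlinarith [h1, h2, h3]
  rw [div_le_iff₀ (by positivity : (0:ℝ) < 2*α)] at hbound
  linarith
end

section
/- Let N ∈ ℕ, d ≥ 1, and let l: L²(D,ν) → ℝ be any function of the network output, where the ReLU network with weights (a_n, b_n, c_n), n = 1,…,N, is N_{ω,c}(x) = Σ_{n=1}^N c_n max{a_n·x + b_n, 0}. Then the infimum over all (a_n, b_n, c_n) ∈ ℝ^d × ℝ × ℝ of l(N_{ω,c}) + (α/2) Σ_{n=1}^N (‖(a_n,b_n)‖² + |c_n|²) equals the infimum over all c_n ∈ ℝ and (a_n,b_n) ∈ S^d (the unit sphere in ℝ^{d+1}) of l(N_{ω,c}) + α Σ_{n=1}^N |c_n|; i.e., the all-weights ℓ₂ penalization problem and the ℓ₁ outer-weight penalization problem with normalized inner weights have the same optimal value. -/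
/-- The unit sphere `S^d = {(a,b) ∈ ℝ^d × ℝ : ‖a‖² + b² = 1}`. -/
def UnitSphereProd (d : ℕ) : Type :=
  { ab : EuclideanSpace ℝ (Fin d) × ℝ // ‖ab.1‖ ^ 2 + ab.2 ^ 2 = 1 }

private lemma sInf_eq_of_subset_of_le (S T : Set ℝ) (hT : T.Nonempty) (h1 : T ⊆ S)
    (h2 : ∀ s ∈ S, ∃ t ∈ T, t ≤ s) : sInf S = sInf T := by
  have hS : S.Nonempty := hT.mono h1
  by_cases hb : BddBelow S
  · refine le_antisymm (csInf_le_csInf hb hT h1) ?_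
    refine le_csInf hS fun s hs => ?_
    obtain ⟨t, htT, hts⟩ := h2 s hs
    exact (csInf_le (hb.mono h1) htT).trans hts
  · have hbT : ¬ BddBelow T := by
      rintro ⟨b, hbT⟩
      refine hb ⟨b, fun s hs => ?_⟩
      obtain ⟨t, htT, hts⟩ := h2 s hs
      exact (hbT htT).trans hts
    rw [Real.sInf_of_not_bddBelow hb, Real.sInf_of_not_bddBelow hbT]

/-- Normalization map: from an arbitrary-weight neuron to a sphere-normalized neuron. -/
noncomputable def psiAux (d : ℕ) (p : EuclideanSpace ℝ (Fin d) × ℝ × ℝ) :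
    UnitSphereProd d × ℝ :=
  if h : ‖p.1‖ ^ 2 + p.2.1 ^ 2 = 0 then
    (⟨(0, 1), by simp⟩, 0)
  else
    (⟨((Real.sqrt (‖p.1‖ ^ 2 + p.2.1 ^ 2))⁻¹ • p.1,
        (Real.sqrt (‖p.1‖ ^ 2 + p.2.1 ^ 2))⁻¹ * p.2.1), by
        have hpos : 0 < ‖p.1‖ ^ 2 + p.2.1 ^ 2 :=
          lt_of_le_of_ne (by positivity) (Ne.symm h)
        have hr : Real.sqrt (‖p.1‖ ^ 2 + p.2.1 ^ 2) ^ 2 = ‖p.1‖ ^ 2 + p.2.1 ^ 2 :=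
          Real.sq_sqrt hpos.le
        have hrpos : 0 < Real.sqrt (‖p.1‖ ^ 2 + p.2.1 ^ 2) := Real.sqrt_pos.mpr hpos
        simp only [norm_smul, norm_inv, Real.norm_eq_abs, abs_of_pos hrpos]
        field_simp
        linarith⟩,
     p.2.2 * Real.sqrt (‖p.1‖ ^ 2 + p.2.1 ^ 2))

lemma psiAux_zero (d : ℕ) (p : EuclideanSpace ℝ (Fin d) × ℝ × ℝ)
    (h : ‖p.1‖ ^ 2 + p.2.1 ^ 2 = 0) : p.1 = 0 ∧ p.2.1 = 0 := by
  have h1 : ‖p.1‖ ^ 2 = 0 := by nlinarith [sq_nonneg p.2.1, norm_nonneg p.1, sq_nonneg ‖p.1‖]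
  have h2 : p.2.1 ^ 2 = 0 := by nlinarith [sq_nonneg ‖p.1‖]
  constructor
  · have := pow_eq_zero_iff (n := 2) (by norm_num) |>.mp h1
    exact norm_eq_zero.mp this
  · exact pow_eq_zero_iff (n := 2) (by norm_num) |>.mp h2

lemma psiAux_fun (d : ℕ) (p : EuclideanSpace ℝ (Fin d) × ℝ × ℝ)
    (x : EuclideanSpace ℝ (Fin d)) :
    (psiAux d p).2 * max (∑ i : Fin d, (psiAux d p).1.1.1 i * x i + (psiAux d p).1.1.2) 0
      = p.2.2 * max (∑ i : Fin d, p.1 i * x i + p.2.1) 0 := by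
  unfold psiAux
  split_ifs with h
  · obtain ⟨ha, hb⟩ := psiAux_zero d p h
    simp [ha, hb]
  · have hpos : 0 < ‖p.1‖ ^ 2 + p.2.1 ^ 2 := lt_of_le_of_ne (by positivity) (Ne.symm h)
    set r := Real.sqrt (‖p.1‖ ^ 2 + p.2.1 ^ 2) with hrdef
    have hrpos : 0 < r := Real.sqrt_pos.mpr hpos
    have hsum : ∑ i : Fin d, (r⁻¹ • p.1) i * x i = r⁻¹ * ∑ i : Fin d, p.1 i * x i := by
      rw [Finset.mul_sum]
      refine Finset.sum_congr rfl fun i _ => ?_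
      simp [PiLp.smul_apply, smul_eq_mul]; ring
    simp only [← hrdef, hsum]
    have : r⁻¹ * ∑ i : Fin d, p.1 i * x i + r⁻¹ * p.2.1
        = r⁻¹ * (∑ i : Fin d, p.1 i * x i + p.2.1) := by ring
    rw [this]
    have hmax : max (r⁻¹ * (∑ i : Fin d, p.1 i * x i + p.2.1)) 0
        = r⁻¹ * max (∑ i : Fin d, p.1 i * x i + p.2.1) 0 := by
      rw [mul_max_of_nonneg _ _ (inv_nonneg.mpr hrpos.le), mul_zero]
    rw [hmax]
    field_simp

lemma psiAux_pen (d : ℕ) (p : EuclideanSpace ℝ (Fin d) × ℝ × ℝ) :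
    |(psiAux d p).2| ≤ (‖p.1‖ ^ 2 + |p.2.1| ^ 2 + |p.2.2| ^ 2) / 2 := by
  unfold psiAux
  split_ifs with h
  · simp only [abs_zero]
    positivity
  · have hpos : 0 < ‖p.1‖ ^ 2 + p.2.1 ^ 2 := lt_of_le_of_ne (by positivity) (Ne.symm h)
    set r := Real.sqrt (‖p.1‖ ^ 2 + p.2.1 ^ 2) with hrdef
    have hrpos : 0 < r := Real.sqrt_pos.mpr hpos
    have hr2 : r ^ 2 = ‖p.1‖ ^ 2 + p.2.1 ^ 2 := Real.sq_sqrt hpos.le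
    have habs : |p.2.2 * r| = |p.2.2| * r := by
      rw [abs_mul, abs_of_pos hrpos]
    rw [habs, sq_abs, sq_abs]
    nlinarith [sq_nonneg (r - |p.2.2|), sq_abs p.2.2, abs_nonneg p.2.2]

lemma phi_fun (d : ℕ) (c : ℝ) (a : EuclideanSpace ℝ (Fin d)) (b : ℝ)
    (x : EuclideanSpace ℝ (Fin d)) :
    (c / Real.sqrt |c|) * max (∑ i : Fin d, (Real.sqrt |c| • a) i * x i
        + Real.sqrt |c| * b) 0
      = c * max (∑ i : Fin d, a i * x i + b) 0 := by
  set s := Real.sqrt |c| with hsdef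
  have hs : 0 ≤ s := Real.sqrt_nonneg _
  have hsum : ∑ i : Fin d, (s • a) i * x i = s * ∑ i : Fin d, a i * x i := by
    rw [Finset.mul_sum]
    refine Finset.sum_congr rfl fun i _ => ?_
    simp [PiLp.smul_apply, smul_eq_mul]; ring
  rw [hsum]
  have h1 : s * ∑ i : Fin d, a i * x i + s * b = s * (∑ i : Fin d, a i * x i + b) := by ring
  rw [h1]
  have hmax : max (s * (∑ i : Fin d, a i * x i + b)) 0
      = s * max (∑ i : Fin d, a i * x i + b) 0 := by
    rw [mul_max_of_nonneg _ _ hs, mul_zero]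
  rw [hmax]
  by_cases hc : c = 0
  · simp [hc]
  · have hs0 : s ≠ 0 := by
      rw [hsdef]
      exact Real.sqrt_ne_zero'.mpr (abs_pos.mpr hc)
    field_simp

lemma phi_pen (d : ℕ) (c : ℝ) (a : EuclideanSpace ℝ (Fin d)) (b : ℝ)
    (hab : ‖a‖ ^ 2 + b ^ 2 = 1) :
    ‖Real.sqrt |c| • a‖ ^ 2 + |Real.sqrt |c| * b| ^ 2 + (abs (c / Real.sqrt |c|)) ^ 2
      = 2 * |c| := by
  set s := Real.sqrt |c| with hsdef
  have hs : 0 ≤ s := Real.sqrt_nonneg _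
  have hs2 : s ^ 2 = |c| := Real.sq_sqrt (abs_nonneg c)
  have h1 : ‖s • a‖ ^ 2 = s ^ 2 * ‖a‖ ^ 2 := by
    rw [norm_smul, Real.norm_eq_abs, abs_of_nonneg hs]; ring
  have h2 : |s * b| ^ 2 = s ^ 2 * b ^ 2 := by rw [sq_abs]; ring
  have h3 : (abs (c / s)) ^ 2 = |c| := by
    by_cases hc : c = 0
    · simp [hc]
    · have hs0 : s ≠ 0 := by
        rw [hsdef]; exact Real.sqrt_ne_zero'.mpr (abs_pos.mpr hc)
      rw [sq_abs, div_pow, hs2, ← sq_abs c, pow_two, mul_self_div_self]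
  rw [h1, h2, h3, hs2]
  nlinarith [hab]

/-- For any loss `l` depending only on the network function, the
all-weights `ℓ₂` penalization problem and the `ℓ₁` outer-weight penalization problem with
inner weights normalized to the unit sphere have the same optimal value:
`inf_{(a,b,c)} l(N_{ω,c}) + (α/2) Σ (‖(aₙ,bₙ)‖² + |cₙ|²)
  = inf_{(a,b)∈S^d, c} l(N_{ω,c}) + α Σ |cₙ|`. -/
theorem l2_allWeights_eq_l1_outerWeights (d N : ℕ) (hd : 1 ≤ d) (α : ℝ) (hα : 0 < α)
    (l : (EuclideanSpace ℝ (Fin d) → ℝ) → ℝ) :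
    (⨅ w : Fin N → EuclideanSpace ℝ (Fin d) × ℝ × ℝ,
      l (fun x => ∑ n : Fin N, (w n).2.2 * max (∑ i : Fin d, (w n).1 i * x i + (w n).2.1) 0)
        + α / 2 * ∑ n : Fin N, (‖(w n).1‖ ^ 2 + |(w n).2.1| ^ 2 + |(w n).2.2| ^ 2))
    = (⨅ w : Fin N → UnitSphereProd d × ℝ,
      l (fun x => ∑ n : Fin N,
          (w n).2 * max (∑ i : Fin d, (w n).1.1.1 i * x i + (w n).1.1.2) 0)
        + α * ∑ n : Fin N, |(w n).2|) := by
  classical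
  set f : (Fin N → EuclideanSpace ℝ (Fin d) × ℝ × ℝ) → ℝ := fun w =>
    l (fun x => ∑ n : Fin N, (w n).2.2 * max (∑ i : Fin d, (w n).1 i * x i + (w n).2.1) 0)
      + α / 2 * ∑ n : Fin N, (‖(w n).1‖ ^ 2 + |(w n).2.1| ^ 2 + |(w n).2.2| ^ 2) with hf
  set g : (Fin N → UnitSphereProd d × ℝ) → ℝ := fun w =>
    l (fun x => ∑ n : Fin N,
        (w n).2 * max (∑ i : Fin d, (w n).1.1.1 i * x i + (w n).1.1.2) 0)
      + α * ∑ n : Fin N, |(w n).2| with hg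
  show sInf (Set.range f) = sInf (Set.range g)
  apply sInf_eq_of_subset_of_le
  · exact ⟨g (fun _ => (⟨(0, 1), by simp⟩, 0)), Set.mem_range_self _⟩
  · -- range g ⊆ range f, via φ : scale inner weights by √|c|
    rintro _ ⟨w, rfl⟩
    refine ⟨fun n => (Real.sqrt |(w n).2| • (w n).1.1.1,
      Real.sqrt |(w n).2| * (w n).1.1.2, (w n).2 / Real.sqrt |(w n).2|), ?_⟩
    simp only [hf, hg]
    congr 1
    · congr 1
      funext x
      exact Finset.sum_congr rfl fun n _ => phi_fun d ((w n).2) ((w n).1.1.1) ((w n).1.1.2) x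
    · have hpen : ∀ n : Fin N,
          ‖Real.sqrt |(w n).2| • (w n).1.1.1‖ ^ 2
            + |Real.sqrt |(w n).2| * (w n).1.1.2| ^ 2
            + (abs ((w n).2 / Real.sqrt |(w n).2|)) ^ 2 = 2 * |(w n).2| :=
        fun n => phi_pen d ((w n).2) ((w n).1.1.1) ((w n).1.1.2) ((w n).1.2)
      rw [Finset.sum_congr rfl fun n _ => hpen n, ← Finset.mul_sum]
      ring
  · -- every value of f dominates a value of g, via ψ = psiAux
    rintro _ ⟨w, rfl⟩
    refine ⟨g (fun n => psiAux d (w n)), Set.mem_range_self _, ?_⟩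
    simp only [hf, hg]
    have hfun : (fun x : EuclideanSpace ℝ (Fin d) => ∑ n : Fin N,
        (psiAux d (w n)).2 * max (∑ i : Fin d, (psiAux d (w n)).1.1.1 i * x i
          + (psiAux d (w n)).1.1.2) 0)
        = (fun x : EuclideanSpace ℝ (Fin d) => ∑ n : Fin N,
            (w n).2.2 * max (∑ i : Fin d, (w n).1 i * x i + (w n).2.1) 0) := by
      funext x
      exact Finset.sum_congr rfl fun n _ => psiAux_fun d (w n) x
    rw [hfun]
    have hsum : ∑ n : Fin N, |(psiAux d (w n)).2|
        ≤ ∑ n : Fin N, (‖(w n).1‖ ^ 2 + |(w n).2.1| ^ 2 + |(w n).2.2| ^ 2) / 2 :=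
      Finset.sum_le_sum fun n _ => psiAux_pen d (w n)
    have : ∑ n : Fin N, (‖(w n).1‖ ^ 2 + |(w n).2.1| ^ 2 + |(w n).2.2| ^ 2) / 2
        = (∑ n : Fin N, (‖(w n).1‖ ^ 2 + |(w n).2.1| ^ 2 + |(w n).2.2| ^ 2)) / 2 := by
      rw [Finset.sum_div]
    rw [this] at hsum
    have : α * ∑ n : Fin N, |(psiAux d (w n)).2|
        ≤ α / 2 * ∑ n : Fin N, (‖(w n).1‖ ^ 2 + |(w n).2.1| ^ 2 + |(w n).2.2| ^ 2) := by
      calc α * ∑ n : Fin N, |(psiAux d (w n)).2|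
          ≤ α * ((∑ n : Fin N, (‖(w n).1‖ ^ 2 + |(w n).2.1| ^ 2 + |(w n).2.2| ^ 2)) / 2) :=
            mul_le_mul_of_nonneg_left hsum hα.le
        _ = α / 2 * ∑ n : Fin N, (‖(w n).1‖ ^ 2 + |(w n).2.1| ^ 2 + |(w n).2.2| ^ 2) := by
            ring
    linarith
end

section
/- Fix γ > 0 and 0 < λ < 1/γ. For q ∈ ℝ, the function c ↦ (1/2)(c − q)² + (λ/γ) log(1 + γ|c|) has a unique global minimizer over ℝ, given by Prox(q) = 0 if |q| ≤ λ, and Prox(q) = (sign q)/(2γ) · [(γ|q| − 1) + √((γ|q| − 1)² + 4γ(|q| − λ))] if |q| > λ. -/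
open Real Set

/-- Derivative of the one-sided objective `g`. -/
lemma hasDerivAt_gaux (γ lam A : ℝ) (hγ : 0 < γ) (t : ℝ) (ht : 0 < 1 + γ * t) :
    HasDerivAt (fun s => 1/2 * s^2 - A * s + 1/2 * A^2 + lam/γ * Real.log (1 + γ * s))
      (t - A + lam / (1 + γ * t)) t := by
  have h1 : HasDerivAt (fun s : ℝ => 1 + γ * s) γ t := by
    simpa using ((hasDerivAt_id t).const_mul γ).const_add 1
  have h2 : HasDerivAt (fun s => Real.log (1 + γ * s)) (γ / (1 + γ * t)) t := by
    simpa [div_eq_inv_mul, Function.comp_def] using (Real.hasDerivAt_log ht.ne').comp t h1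
  have h3 : HasDerivAt (fun s : ℝ => 1/2 * s^2 - A * s + 1/2 * A^2) (t - A) t := by
    have h := (((hasDerivAt_pow 2 t).const_mul (1/2:ℝ)).sub
      ((hasDerivAt_id t).const_mul A)).add_const (1/2 * A^2)
    refine h.congr_deriv ?_
    push_cast
    ring
  have := h3.add (h2.const_mul (lam/γ))
  refine this.congr_deriv ?_
  field_simp

/-- The one-sided objective has a strict global minimum on `[0,∞)` at the critical point. -/
lemma gaux_min (γ lam A t₀ : ℝ) (hγ : 0 < γ) (hlam : 0 < lam) (hlamγ : lam * γ < 1)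
    (ht₀ : 0 ≤ t₀)
    (hd : t₀ - A + lam / (1 + γ * t₀) = 0 ∨ (t₀ = 0 ∧ A ≤ lam)) :
    ∀ t, 0 ≤ t → t ≠ t₀ →
      1/2 * t₀^2 - A * t₀ + 1/2 * A^2 + lam/γ * Real.log (1 + γ * t₀) <
      1/2 * t^2 - A * t + 1/2 * A^2 + lam/γ * Real.log (1 + γ * t) := by
  set g : ℝ → ℝ := fun s => 1/2 * s^2 - A * s + 1/2 * A^2 + lam/γ * Real.log (1 + γ * s)
    with hg
  set g' : ℝ → ℝ := fun s => s - A + lam / (1 + γ * s) with hg'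
  have hpos : ∀ s : ℝ, 0 ≤ s → 0 < 1 + γ * s := fun s hs => by nlinarith
  have hmono : ∀ s u : ℝ, 0 ≤ s → s < u → g' s < g' u := by
    intro s u hs hsu
    have hs1 : (1:ℝ) ≤ 1 + γ * s := by nlinarith
    have hu1 : (1:ℝ) ≤ 1 + γ * u := by nlinarith
    have hsne : (1 + γ * s) ≠ 0 := by linarith
    have hune : (1 + γ * u) ≠ 0 := by linarith
    have hdiff : g' u - g' s
        = (u - s) - lam * γ * (u - s) / ((1 + γ * s) * (1 + γ * u)) := by
      simp only [hg']
      rw [div_eq_mul_inv, div_eq_mul_inv, div_eq_mul_inv, mul_inv]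
      have e1 : (1 + γ * s) * (1 + γ * s)⁻¹ = 1 := mul_inv_cancel₀ hsne
      have e2 : (1 + γ * u) * (1 + γ * u)⁻¹ = 1 := mul_inv_cancel₀ hune
      linear_combination (-(lam * (1 + γ * u)⁻¹)) * e1 + (lam * (1 + γ * s)⁻¹) * e2
    have hab : (1:ℝ) ≤ (1 + γ * s) * (1 + γ * u) := by nlinarith
    have h2 : lam * γ * (u - s) / ((1 + γ * s) * (1 + γ * u)) < (u - s) := by
      rw [div_lt_iff₀ (by nlinarith)]
      nlinarith [mul_le_mul_of_nonneg_left hab (sub_pos.mpr hsu).le]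
    have h3 : 0 < g' u - g' s := by rw [hdiff]; linarith
    linarith
  have hderiv : ∀ x : ℝ, 0 ≤ x → deriv g x = g' x := fun x hx =>
    (hasDerivAt_gaux γ lam A hγ x (hpos x hx)).deriv
  have hcont : ∀ x : ℝ, 0 ≤ x → ContinuousAt g x := fun x hx =>
    (hasDerivAt_gaux γ lam A hγ x (hpos x hx)).continuousAt
  have hgt0 : 0 ≤ g' t₀ := by
    rcases hd with h | ⟨h0, hA⟩
    · simp only [hg']; linarith [h.ge, h.le]
    · simp only [hg', h0]
      simp
      linarith
  have hm : StrictMonoOn g (Ici t₀) := by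
    apply strictMonoOn_of_deriv_pos (convex_Ici t₀)
      (fun x hx => (hcont x (le_trans ht₀ hx)).continuousWithinAt)
    intro x hx
    rw [interior_Ici] at hx
    rw [hderiv x (le_trans ht₀ hx.le)]
    have := hmono t₀ x ht₀ hx
    linarith
  have ha : StrictAntiOn g (Icc 0 t₀) := by
    apply strictAntiOn_of_deriv_neg (convex_Icc 0 t₀)
      (fun x hx => (hcont x hx.1).continuousWithinAt)
    intro x hx
    rw [interior_Icc] at hx
    rw [hderiv x hx.1.le]
    have h1 : g' x < g' t₀ := hmono x t₀ hx.1.le hx.2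
    have h2 : g' t₀ ≤ 0 := by
      rcases hd with h | ⟨h0, hA⟩
      · simp only [hg']; linarith [h.le]
      · exfalso; rw [h0] at hx; linarith [hx.1, hx.2]
    linarith
  intro t ht htne
  rcases lt_or_gt_of_ne htne with h | h
  · exact ha (Set.mem_Icc.mpr ⟨ht, h.le⟩) (Set.mem_Icc.mpr ⟨ht₀, le_refl _⟩) h
  · exact hm (Set.mem_Ici.mpr (le_refl _)) (Set.mem_Ici.mpr h.le) h

/-- Fix `γ > 0` and `0 < λ < 1/γ`. For `q ∈ ℝ`, the nonconvex proximal
problem `c ↦ (1/2)(c - q)² + (λ/γ) log(1 + γ|c|)` has a unique global minimizer over `ℝ`,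
given by `Prox(q) = 0` if `|q| ≤ λ` and
`Prox(q) = (sign q)/(2γ) ⬝ [(γ|q| - 1) + √((γ|q| - 1)² + 4γ(|q| - λ))]` if `|q| > λ`. -/
theorem prox_logPenalty (γ lam q : ℝ) (hγ : 0 < γ) (hlam : 0 < lam) (hlamγ : lam < 1 / γ)
    (F : ℝ → ℝ)
    (hF : ∀ c, F c = 1 / 2 * (c - q) ^ 2 + lam / γ * Real.log (1 + γ * |c|))
    (P : ℝ)
    (hP₀ : |q| ≤ lam → P = 0)
    (hP₁ : lam < |q| → P = Real.sign q / (2 * γ) *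
      ((γ * |q| - 1) + Real.sqrt ((γ * |q| - 1) ^ 2 + 4 * γ * (|q| - lam)))) :
    (∀ c : ℝ, F P ≤ F c) ∧ ∀ c : ℝ, F c = F P → c = P := by
  have hγ' : lam * γ < 1 := by rwa [lt_div_iff₀ hγ] at hlamγ
  set A := |q| with hA
  have hA0 : 0 ≤ A := abs_nonneg q
  have hAq : A ^ 2 = q ^ 2 := by rw [hA]; exact sq_abs q
  set G : ℝ → ℝ := fun t => 1/2 * t^2 - A * t + 1/2 * A^2 + lam/γ * Real.log (1 + γ * t)
    with hG
  have hFg : ∀ c : ℝ, F c = G |c| + (A * |c| - c * q) := by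
    intro c
    rw [hF c]
    simp only [hG]
    have h1 : |c| ^ 2 = c ^ 2 := sq_abs c
    nlinarith [h1, hAq]
  have hslack : ∀ c : ℝ, 0 ≤ A * |c| - c * q := by
    intro c
    have h1 : c * q ≤ |c * q| := le_abs_self _
    have h2 : |c * q| = |c| * A := by rw [hA, abs_mul]
    nlinarith
  rcases le_or_gt A lam with hcase | hcase
  · -- |q| ≤ lam, P = 0
    have hP : P = 0 := hP₀ hcase
    have hmin : ∀ t : ℝ, 0 ≤ t → t ≠ 0 → G 0 < G t := by
      intro t ht h
      simp only [hG]
      exact gaux_min γ lam A 0 hγ hlam hγ' le_rfl (Or.inr ⟨rfl, hcase⟩) t ht h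
    have hFP : F P = G 0 := by
      rw [hP, hFg 0]
      simp
    constructor
    · intro c
      rw [hFP, hFg c]
      rcases eq_or_ne (|c|) 0 with hc | hc
      · have h := hslack c; rw [hc] at h ⊢; linarith
      · have := hmin (|c|) (abs_nonneg c) hc
        linarith [hslack c]
    · intro c hc
      by_contra hne
      rw [hP] at hne
      have hcabs : |c| ≠ 0 := fun h => hne (abs_eq_zero.mp h)
      have h1 := hmin (|c|) (abs_nonneg c) hcabs
      rw [hFg c, hFP] at hc
      linarith [hslack c]
  · -- lam < |q|
    have hq0 : q ≠ 0 := fun h => by rw [hA, h] at hcase; simp at hcase; linarith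
    set Δ := (γ * A - 1) ^ 2 + 4 * γ * (A - lam) with hΔdef
    have hΔ : 0 < Δ := by nlinarith
    set R := Real.sqrt Δ with hRdef
    have hR2 : R ^ 2 = Δ := Real.sq_sqrt hΔ.le
    have hRpos : 0 < R := Real.sqrt_pos.mpr hΔ
    set t₀ := ((γ * A - 1) + R) / (2 * γ) with ht₀def
    have ht₀pos : 0 < t₀ := by
      apply div_pos _ (by linarith)
      nlinarith [hR2, hRpos, sq_nonneg (R + (γ * A - 1)), sq_nonneg (R - (γ * A - 1))]
    have h1t : 0 < 1 + γ * t₀ := by nlinarith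
    have hR' : R = 2 * γ * t₀ - (γ * A - 1) := by
      rw [ht₀def]; field_simp; ring
    have hquad : γ * t₀ ^ 2 + (1 - γ * A) * t₀ + (lam - A) = 0 := by
      rw [hR'] at hR2
      rw [hΔdef] at hR2
      have h4 : 4 * γ * (γ * t₀ ^ 2 + (1 - γ * A) * t₀ + (lam - A)) = 0 := by
        linear_combination hR2
      rcases mul_eq_zero.mp h4 with h | h
      · exfalso; linarith
      · exact h
    have hcrit : t₀ - A + lam / (1 + γ * t₀) = 0 := by
      field_simp [h1t.ne']
      linear_combination hquad
    have hmin : ∀ t : ℝ, 0 ≤ t → t ≠ t₀ → G t₀ < G t := by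
      intro t ht h
      simp only [hG]
      exact gaux_min γ lam A t₀ hγ hlam hγ' ht₀pos.le (Or.inl hcrit) t ht h
    have hsign : Real.sign q * q = A := by
      rcases lt_or_gt_of_ne hq0 with hq | hq
      · rw [Real.sign_of_neg hq, hA, abs_of_neg hq]; ring
      · rw [Real.sign_of_pos hq, hA, abs_of_pos hq]; ring
    have hPt : P = Real.sign q * t₀ := by
      rw [hP₁ hcase, ht₀def]; ring
    have hsign1 : |Real.sign q| = 1 := by
      rcases lt_or_gt_of_ne hq0 with hq | hq
      · rw [Real.sign_of_neg hq]; simp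
      · rw [Real.sign_of_pos hq]; simp
    have habs : |P| = t₀ := by
      rw [hPt, abs_mul, hsign1, one_mul, abs_of_pos ht₀pos]
    have hPq : P * q = t₀ * A := by
      rw [hPt]; linear_combination t₀ * hsign
    have hFP : F P = G t₀ := by
      rw [hFg P, habs]
      linarith [hPq]
    have hApos : 0 < A := lt_trans hlam hcase
    constructor
    · intro c
      rw [hFP, hFg c]
      rcases eq_or_ne (|c|) t₀ with hc | hc
      · have h := hslack c; rw [hc] at h ⊢; linarith
      · have := hmin (|c|) (abs_nonneg c) hc
        linarith [hslack c]
    · intro c hc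
      rw [hFg c, hFP] at hc
      have hceq : |c| = t₀ := by
        by_contra hne
        have := hmin (|c|) (abs_nonneg c) hne
        linarith [hslack c]
      have hcq : c * q = t₀ * A := by
        have h := hslack c
        rw [hceq] at hc h
        linarith
      have hcqpos : 0 < c * q := by rw [hcq]; exact mul_pos ht₀pos hApos
      rcases lt_or_gt_of_ne hq0 with hq | hq
      · have hcneg : c < 0 := by
          by_contra h
          have h2 : 0 ≤ c * (-q) := mul_nonneg (not_lt.mp h) (by linarith)
          linarith only [h2, hcqpos]
        have habsc : |c| = -c := abs_of_neg hcneg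
        rw [hPt, Real.sign_of_neg hq]
        linarith only [hceq, habsc]
      · have hcpos : 0 < c := by
          by_contra h
          have h2 : 0 ≤ (-c) * q := mul_nonneg (by linarith only [not_lt.mp h]) hq.le
          linarith only [h2, hcqpos]
        have habsc : |c| = c := abs_of_pos hcpos
        rw [hPt, Real.sign_of_pos hq]
        linarith only [hceq, habsc]
end
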